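/- arXiv:1610.04434 — 11 statements merged into one kernel-verified Lean document; each statement's English description precedes it below -/
import Mathlib

section
/- Let f : ℝ → ℝ be locally integrable. The firing map Φ of the LIF model with leak σ ≥ 0, defined by Φ(t) = inf{ t* > t : e^{σt} ≤ ∫_t^{t*} (f(u) − σ) e^{σu} du }, is well-defined (i.e. the defining set is nonempty) for every t ∈ ℝ if and only if limsup_{t→+∞} ∫_0^t (f(u) − σ) e^{σu} du = +∞. -/
open MeasureTheory Filter Set intervalIntegral

noncomputable section

/-- A set `A ⊆ ℝ` is relatively dense. -/
def RelDense (A : Set ℝ) : Prop := ∃ l > 0, ∀ x : ℝ, ∃ τ ∈ A, x < τ ∧ τ < x + l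

/-- The set over which the infimum defining the LIF firing map is taken. -/
def FiringSet (σ : ℝ) (f : ℝ → ℝ) (t : ℝ) : Set ℝ :=
  {t' | t < t' ∧ Real.exp (σ * t) ≤ ∫ u in t..t', (f u - σ) * Real.exp (σ * u)}

/-- `y` is the firing-map value at `t`: the smallest `t' > t` with
`e^{σ t} = ∫_t^{t'} (f u - σ) e^{σ u} du`. -/
def FiringEq (σ : ℝ) (f : ℝ → ℝ) (t y : ℝ) : Prop :=
  IsLeast {t' | t < t' ∧ Real.exp (σ * t) = ∫ u in t..t', (f u - σ) * Real.exp (σ * u)} y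

/-- The Stepanov `S¹` seminorm. -/
def SNorm (f : ℝ → ℝ) : ℝ := ⨆ t : ℝ, ∫ u in t..(t + 1), |f u|

/-- Stepanov `S¹`-almost periodicity. -/
def S1AP (f : ℝ → ℝ) : Prop :=
  ∀ ε > 0, RelDense {τ | SNorm (fun u => f (u + τ) - f u) < ε}

/-- `D(η; f, g) = sup_u μ({t ∈ [u,u+1] : |f t - g t| ≥ η})`. -/
def Dfun (η : ℝ) (f g : ℝ → ℝ) : ℝ :=
  ⨆ u : ℝ, (volume {t ∈ Set.Icc u (u + 1) | η ≤ |f t - g t|}).toReal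

/-- Almost periodicity in the Lebesgue measure (μ-almost periodicity). -/
def MuAP (f : ℝ → ℝ) : Prop :=
  ∀ ε > 0, ∀ η > 0, RelDense {τ | Dfun η (fun t => f (t + τ)) f ≤ ε}

/-- Bohr (uniform) almost periodicity. -/
def BohrAP (g : ℝ → ℝ) : Prop :=
  Continuous g ∧ ∀ ε > 0, RelDense {τ | (⨆ t : ℝ, |g (t + τ) - g t|) < ε}

/-- Limit-periodicity: `g` is a uniform limit of continuous periodic functions. -/
def LimitPeriodic (g : ℝ → ℝ) : Prop :=
  ∃ gn : ℕ → ℝ → ℝ, (∀ n, Continuous (gn n) ∧ ∃ p > 0, Function.Periodic (gn n) p) ∧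
    TendstoUniformly gn g atTop

lemma myIntInt (σ : ℝ) (f : ℝ → ℝ) (hf : LocallyIntegrable f volume) (a b : ℝ) :
    IntervalIntegrable (fun u => (f u - σ) * Real.exp (σ * u)) volume a b := by
  have h1 : LocallyIntegrable (fun u => f u - σ) volume := hf.sub (locallyIntegrable_const σ)
  have h3 : IntegrableOn (fun u => (f u - σ) * Real.exp (σ * u)) (Set.uIcc a b) volume :=
    (h1.integrableOn_isCompact isCompact_uIcc).mul_continuousOn
      (Continuous.continuousOn (by fun_prop)) isCompact_uIcc
  rw [intervalIntegrable_iff]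
  exact h3.mono_set Set.uIoc_subset_uIcc

theorem stmt0 (σ : ℝ) (hσ : 0 ≤ σ) (f : ℝ → ℝ) (hf : LocallyIntegrable f volume) :
    (∀ t : ℝ, (FiringSet σ f t).Nonempty) ↔
      (∀ M : ℝ, ∃ᶠ t in atTop, M ≤ ∫ u in (0:ℝ)..t, (f u - σ) * Real.exp (σ * u)) := by
  set g : ℝ → ℝ := fun u => (f u - σ) * Real.exp (σ * u) with hg
  have hii : ∀ a b : ℝ, IntervalIntegrable g volume a b := myIntInt σ f hf
  set F : ℝ → ℝ := fun t => ∫ u in (0:ℝ)..t, g u with hF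
  have hsplit : ∀ a b : ℝ, (∫ u in a..b, g u) = F b - F a := by
    intro a b
    rw [← intervalIntegral.integral_interval_sub_left (hii 0 b) (hii 0 a)]
  constructor
  · intro h M
    rw [frequently_atTop]
    intro a
    have key : ∀ n : ℕ, ∃ t, a ≤ t ∧ F a + n * Real.exp (σ * a) ≤ F t := by
      intro n
      induction n with
      | zero => exact ⟨a, le_refl a, by simp⟩
      | succ n ih =>
        obtain ⟨t, hat, hFt⟩ := ih
        obtain ⟨t', ht', hle⟩ := h t
        refine ⟨t', hat.trans ht'.le, ?_⟩
        have h1 : Real.exp (σ * a) ≤ Real.exp (σ * t) :=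
          Real.exp_le_exp.mpr (mul_le_mul_of_nonneg_left hat hσ)
        have h2 : Real.exp (σ * a) ≤ F t' - F t := by
          rw [← hsplit]; exact h1.trans hle
        push_cast
        nlinarith
    obtain ⟨n, hn⟩ := exists_nat_ge ((M - F a) / Real.exp (σ * a))
    obtain ⟨t, hat, hFt⟩ := key n
    refine ⟨t, hat, ?_⟩
    have hpos := Real.exp_pos (σ * a)
    rw [div_le_iff₀ hpos] at hn
    linarith
  · intro h t
    obtain ⟨t', ht', hM⟩ := (frequently_atTop.mp (h (F t + Real.exp (σ * t)))) (t + 1)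
    refine ⟨t', by linarith, ?_⟩
    rw [hsplit]
    linarith
end
end

section
/- Let f : ℝ → ℝ be locally integrable such that the mean value M{f} = lim_{T→+∞} (1/T) ∫_0^T f(u) du exists (allowing the value +∞) and satisfies M{f} > σ, where σ ≥ 0. Then limsup_{t→+∞} ∫_0^t (f(u) − σ) e^{σu} du = +∞; in particular the firing map of the LIF model with leak σ is well-defined for every t ∈ ℝ. -/
open MeasureTheory Filter Set intervalIntegral

noncomputable section

private lemma exp_sub_exp_le {c a b : ℝ} (ha : a ≤ c) (hb : b ≤ c) :
    |Real.exp a - Real.exp b| ≤ Real.exp c * |a - b| := by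
  wlog h : b ≤ a generalizing a b
  · rw [abs_sub_comm, abs_sub_comm a b]
    exact this hb ha (le_of_not_ge h)
  have h1 : b - a + 1 ≤ Real.exp (b - a) := Real.add_one_le_exp _
  have h2 : Real.exp (b - a) * Real.exp a = Real.exp b := by
    rw [← Real.exp_add]; ring_nf
  have h3 : Real.exp a ≤ Real.exp c := Real.exp_le_exp.2 ha
  have h4 : Real.exp b ≤ Real.exp a := Real.exp_le_exp.2 h
  have h5 : (0:ℝ) < Real.exp a := Real.exp_pos a
  rw [abs_of_nonneg (by linarith), abs_of_nonneg (by linarith : (0:ℝ) ≤ a - b)]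
  nlinarith [mul_nonneg (sub_nonneg.2 h) (sub_nonneg.2 h3)]

private lemma hasDerivAt_phi (σ : ℝ) (hσ : 0 ≤ σ) (G : ℝ → ℝ)
    (hG : ∀ a b : ℝ, IntervalIntegrable G volume a b) (T : ℝ) :
    HasDerivAt (fun t => (∫ u in (0:ℝ)..t, G u * Real.exp (-(σ * u)))
        - Real.exp (-(σ * t)) * ∫ u in (0:ℝ)..t, G u)
      (σ * Real.exp (-(σ * T)) * ∫ u in (0:ℝ)..T, G u) T := by
  have hGe : ∀ a b : ℝ, IntervalIntegrable (fun u => G u * Real.exp (-(σ * u))) volume a b :=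
    fun a b => (hG a b).mul_continuousOn
      (((continuous_const.mul continuous_id).neg.rexp).continuousOn)
  have hGa : ∀ a b : ℝ, IntervalIntegrable (fun u => |G u|) volume a b := fun a b => (hG a b).abs
  rw [hasDerivAt_iff_isLittleO]
  have hψ : HasDerivAt (fun x => -(∫ u in (0:ℝ)..T, G u) * Real.exp (-(σ * x)))
      ((∫ u in (0:ℝ)..T, G u) * (σ * Real.exp (-(σ * T)))) T := by
    have h1 : HasDerivAt (fun x : ℝ => -(σ * x)) (-σ) T := by
      simpa using ((hasDerivAt_id T).const_mul (-σ))
    have h2 := (h1.exp).const_mul (-(∫ u in (0:ℝ)..T, G u))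
    exact h2.congr_deriv (by ring)
  have hs_o := hasDerivAt_iff_isLittleO.1 hψ
  have hr_o : (fun x => ∫ u in T..x, G u * (Real.exp (-(σ * u)) - Real.exp (-(σ * x))))
      =o[nhds T] fun x => x - T := by
    rw [Asymptotics.isLittleO_iff]
    intro c hc
    set C : ℝ := σ * Real.exp (σ * (|T| + 1)) with hCdef
    have hC0 : 0 ≤ C := mul_nonneg hσ (Real.exp_pos _).le
    have hε : 0 < c / (C + 1) := div_pos hc (by linarith)
    have hPc : Continuous fun x => ∫ u in T..x, |G u| :=
      intervalIntegral.continuous_primitive hGa T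
    have hPT : (∫ u in T..T, |G u|) = (0:ℝ) := intervalIntegral.integral_same
    have h1 : ∀ᶠ x in nhds T, |(∫ u in T..x, |G u|)| < c / (C + 1) := by
      have h0 := hPc.continuousAt (x := T)
      rw [ContinuousAt, hPT] at h0
      have h2 := h0.eventually (eventually_abs_sub_lt 0 hε)
      simpa using h2
    have h2 : ∀ᶠ x in nhds T, |x - T| ≤ 1 :=
      (eventually_abs_sub_lt T one_pos).mono fun x hx => hx.le
    filter_upwards [h1, h2] with x hP hx1
    have hxabs : |x| ≤ |T| + 1 := by
      have := abs_sub_abs_le_abs_sub x T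
      linarith
    have key : ∀ u ∈ Set.uIoc T x, ‖G u * (Real.exp (-(σ * u)) - Real.exp (-(σ * x)))‖
        ≤ C * |x - T| * |G u| := by
      intro u hu
      rw [Set.mem_uIoc] at hu
      have hu1 : |u - T| ≤ |x - T| := by
        rcases hu with ⟨h, h'⟩ | ⟨h, h'⟩
        · rw [abs_of_nonneg (by linarith)]
          linarith [le_abs_self (x - T)]
        · rw [abs_of_nonpos (by linarith)]
          linarith [neg_abs_le (x - T)]
      have hu2 : |x - u| ≤ |x - T| := by
        rcases hu with ⟨h, h'⟩ | ⟨h, h'⟩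
        · rw [abs_of_nonneg (by linarith)]
          linarith [le_abs_self (x - T)]
        · rw [abs_of_nonpos (by linarith)]
          linarith [neg_abs_le (x - T)]
      have huT : |u| ≤ |T| + 1 := by
        have := abs_sub_abs_le_abs_sub u T
        linarith [hu1.trans hx1]
      have hb1 : -(σ * u) ≤ σ * (|T| + 1) := by
        have h9 : -u ≤ |T| + 1 := (neg_le_abs u).trans huT
        calc -(σ * u) = σ * (-u) := by ring
          _ ≤ σ * (|T| + 1) := mul_le_mul_of_nonneg_left h9 hσ
      have hb2 : -(σ * x) ≤ σ * (|T| + 1) := by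
        have h9 : -x ≤ |T| + 1 := (neg_le_abs x).trans hxabs
        calc -(σ * x) = σ * (-x) := by ring
          _ ≤ σ * (|T| + 1) := mul_le_mul_of_nonneg_left h9 hσ
      have hexp : |Real.exp (-(σ * u)) - Real.exp (-(σ * x))| ≤
          Real.exp (σ * (|T| + 1)) * (σ * |x - T|) := by
        have h9 := exp_sub_exp_le hb1 hb2
        have harg : |(-(σ * u)) - (-(σ * x))| = σ * |x - u| := by
          rw [show (-(σ * u)) - (-(σ * x)) = σ * (x - u) by ring, abs_mul, abs_of_nonneg hσ]
        rw [harg] at h9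
        refine h9.trans ?_
        exact mul_le_mul_of_nonneg_left (mul_le_mul_of_nonneg_left hu2 hσ) (Real.exp_pos _).le
      rw [Real.norm_eq_abs, abs_mul]
      calc |G u| * |Real.exp (-(σ * u)) - Real.exp (-(σ * x))|
          ≤ |G u| * (Real.exp (σ * (|T| + 1)) * (σ * |x - T|)) :=
            mul_le_mul_of_nonneg_left hexp (abs_nonneg _)
        _ = C * |x - T| * |G u| := by rw [hCdef]; ring
    have hbound : IntervalIntegrable (fun u => C * |x - T| * |G u|) volume T x :=
      (hGa T x).const_mul _
    have hle := intervalIntegral.norm_integral_le_abs_of_norm_le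
      ((ae_restrict_iff' measurableSet_uIoc).2 (Filter.Eventually.of_forall key)) hbound
    rw [intervalIntegral.integral_const_mul] at hle
    simp only [Real.norm_eq_abs]
    have h9 : C / (C + 1) ≤ 1 := by
      rw [div_le_one (by linarith)]; linarith
    calc |∫ u in T..x, G u * (Real.exp (-(σ * u)) - Real.exp (-(σ * x)))|
        ≤ |C * |x - T| * (∫ u in T..x, |G u|)| := hle
      _ = C * |x - T| * |(∫ u in T..x, |G u|)| := by
          rw [abs_mul, abs_of_nonneg (mul_nonneg hC0 (abs_nonneg _))]
      _ ≤ C * |x - T| * (c / (C + 1)) :=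
          mul_le_mul_of_nonneg_left hP.le (mul_nonneg hC0 (abs_nonneg _))
      _ = (C / (C + 1)) * (c * |x - T|) := by ring
      _ ≤ 1 * (c * |x - T|) :=
          mul_le_mul_of_nonneg_right h9 (mul_nonneg hc.le (abs_nonneg _))
      _ = c * |x - T| := one_mul _
  refine (hr_o.add hs_o).congr (fun x => ?_) (fun x => rfl)
  simp only [smul_eq_mul]
  have hF2 : (∫ u in (0:ℝ)..x, G u) = (∫ u in (0:ℝ)..T, G u) + ∫ u in T..x, G u := by
    have := intervalIntegral.integral_add_adjacent_intervals (hG 0 T) (hG T x)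
    linarith
  have hA2 : (∫ u in (0:ℝ)..x, G u * Real.exp (-(σ * u)))
      = (∫ u in (0:ℝ)..T, G u * Real.exp (-(σ * u)))
        + ∫ u in T..x, G u * Real.exp (-(σ * u)) := by
    have := intervalIntegral.integral_add_adjacent_intervals (hGe 0 T) (hGe T x)
    linarith
  have hsplit : (∫ u in T..x, G u * (Real.exp (-(σ * u)) - Real.exp (-(σ * x))))
      = (∫ u in T..x, G u * Real.exp (-(σ * u)))
        - Real.exp (-(σ * x)) * ∫ u in T..x, G u := by
    rw [← intervalIntegral.integral_const_mul,
      ← intervalIntegral.integral_sub (hGe T x) ((hG T x).const_mul _)]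
    apply intervalIntegral.integral_congr
    intro u _
    ring
  linear_combination hsplit - hA2 + Real.exp (-(σ * x)) * hF2

private lemma key_identity (σ : ℝ) (hσ : 0 ≤ σ) (G : ℝ → ℝ)
    (hG : ∀ a b : ℝ, IntervalIntegrable G volume a b) (T : ℝ) :
    (∫ u in (0:ℝ)..T, G u * Real.exp (-(σ * u)))
      = Real.exp (-(σ * T)) * (∫ u in (0:ℝ)..T, G u)
        + ∫ t in (0:ℝ)..T, σ * Real.exp (-(σ * t)) * ∫ u in (0:ℝ)..t, G u := by
  have hFc : Continuous fun t => ∫ u in (0:ℝ)..t, G u :=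
    intervalIntegral.continuous_primitive hG 0
  have hcont : Continuous fun t => σ * Real.exp (-(σ * t)) * ∫ u in (0:ℝ)..t, G u :=
    (continuous_const.mul ((continuous_const.mul continuous_id).neg.rexp)).mul hFc
  have hFTC := intervalIntegral.integral_eq_sub_of_hasDerivAt
    (f := fun t => (∫ u in (0:ℝ)..t, G u * Real.exp (-(σ * u)))
        - Real.exp (-(σ * t)) * ∫ u in (0:ℝ)..t, G u)
    (fun x _ => hasDerivAt_phi σ hσ G hG x) (hcont.intervalIntegrable 0 T)
  simp only [intervalIntegral.integral_same, mul_zero, sub_zero] at hFTC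
  linarith

theorem stmt1 (σ : ℝ) (hσ : 0 ≤ σ) (f : ℝ → ℝ) (hf : LocallyIntegrable f volume)
    (hmean :
      (∃ m : ℝ, σ < m ∧
          Tendsto (fun T => (1 / T) * ∫ u in (0:ℝ)..T, f u) atTop (nhds m)) ∨
        Tendsto (fun T => (1 / T) * ∫ u in (0:ℝ)..T, f u) atTop atTop) :
    (∀ M : ℝ, ∃ᶠ t in atTop, M ≤ ∫ u in (0:ℝ)..t, (f u - σ) * Real.exp (σ * u)) ∧
      ∀ t : ℝ, (FiringSet σ f t).Nonempty := by
  have hfInt : ∀ a b : ℝ, IntervalIntegrable f volume a b :=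
    fun a b => (hf.integrableOn_isCompact isCompact_uIcc).intervalIntegrable
  have hgInt : ∀ a b : ℝ, IntervalIntegrable
      (fun u => (f u - σ) * Real.exp (σ * u)) volume a b :=
    fun a b => ((hfInt a b).sub intervalIntegrable_const).mul_continuousOn
      ((continuous_const.mul continuous_id).rexp.continuousOn)
  have hpt : ∀ u : ℝ, ((f u - σ) * Real.exp (σ * u)) * Real.exp (-(σ * u)) = f u - σ := by
    intro u
    rw [mul_assoc, ← Real.exp_add]
    simp
  have hkey : ∀ T : ℝ, (∫ u in (0:ℝ)..T, f u) - σ * T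
      = Real.exp (-(σ * T)) * (∫ u in (0:ℝ)..T, (f u - σ) * Real.exp (σ * u))
        + ∫ t in (0:ℝ)..T, σ * Real.exp (-(σ * t))
            * ∫ u in (0:ℝ)..t, (f u - σ) * Real.exp (σ * u) := by
    intro T
    have h1 := key_identity σ hσ (fun u => (f u - σ) * Real.exp (σ * u)) hgInt T
    have h2 : (∫ u in (0:ℝ)..T, ((f u - σ) * Real.exp (σ * u)) * Real.exp (-(σ * u)))
        = ∫ u in (0:ℝ)..T, (f u - σ) :=
      intervalIntegral.integral_congr fun u _ => hpt u
    have h3 : (∫ u in (0:ℝ)..T, (f u - σ))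
        = (∫ u in (0:ℝ)..T, f u) - σ * T := by
      rw [intervalIntegral.integral_sub (hfInt 0 T) intervalIntegrable_const,
        intervalIntegral.integral_const]
      simp [mul_comm]
    rw [h2, h3] at h1
    exact h1
  obtain ⟨c, hcσ, hev⟩ : ∃ c, σ < c ∧ ∀ᶠ T in atTop, c * T ≤ ∫ u in (0:ℝ)..T, f u := by
    rcases hmean with ⟨m, hm, hten⟩ | hten
    · refine ⟨(σ + m) / 2, by linarith, ?_⟩
      have h1 : ∀ᶠ T in atTop, (σ + m) / 2 < (1 / T) * ∫ u in (0:ℝ)..T, f u :=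
        hten.eventually (eventually_gt_nhds (by linarith))
      filter_upwards [h1, eventually_ge_atTop (1:ℝ)] with T h hT
      have hT0 : (0:ℝ) < T := by linarith
      have h4 := mul_le_mul_of_nonneg_right h.le hT0.le
      have h5 : (1 / T) * (∫ u in (0:ℝ)..T, f u) * T = ∫ u in (0:ℝ)..T, f u := by
        field_simp
      linarith
    · refine ⟨σ + 1, by linarith, ?_⟩
      have h1 : ∀ᶠ T in atTop, σ + 1 ≤ (1 / T) * ∫ u in (0:ℝ)..T, f u :=
        hten.eventually (eventually_ge_atTop (σ + 1))
      filter_upwards [h1, eventually_ge_atTop (1:ℝ)] with T h hT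
      have hT0 : (0:ℝ) < T := by linarith
      have h4 := mul_le_mul_of_nonneg_right h hT0.le
      have h5 : (1 / T) * (∫ u in (0:ℝ)..T, f u) * T = ∫ u in (0:ℝ)..T, f u := by
        field_simp
      linarith
  have part1 : ∀ M : ℝ, ∃ᶠ t in atTop,
      M ≤ ∫ u in (0:ℝ)..t, (f u - σ) * Real.exp (σ * u) := by
    intro M
    by_contra hcon
    rw [not_frequently] at hcon
    obtain ⟨T₀', hT₀'⟩ := eventually_atTop.1 hcon
    set T₀ : ℝ := max T₀' 0 with hT₀def
    have hT₀0 : (0:ℝ) ≤ T₀ := le_max_right _ _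
    have hFM : ∀ t, T₀ ≤ t → (∫ u in (0:ℝ)..t, (f u - σ) * Real.exp (σ * u)) < M :=
      fun t ht => not_le.1 (hT₀' t ((le_max_left _ _).trans ht))
    have hFc : Continuous fun t => ∫ u in (0:ℝ)..t, (f u - σ) * Real.exp (σ * u) :=
      intervalIntegral.continuous_primitive hgInt 0
    obtain ⟨C, hC⟩ := (isCompact_Icc (a := (0:ℝ)) (b := T₀)).bddAbove_image
      hFc.continuousOn
    set K : ℝ := max (max M C) 0 with hKdef
    have hK0 : (0:ℝ) ≤ K := le_max_right _ _
    have hK : ∀ s : ℝ, 0 ≤ s → (∫ u in (0:ℝ)..s, (f u - σ) * Real.exp (σ * u)) ≤ K := by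
      intro s hs
      rcases le_total s T₀ with h | h
      · exact le_trans (hC (mem_image_of_mem _ ⟨hs, h⟩))
          (le_trans (le_max_right M C) (le_max_left _ _))
      · exact le_trans (hFM s h).le (le_trans (le_max_left M C) (le_max_left _ _))
    obtain ⟨T₁, hT₁⟩ := eventually_atTop.1 hev
    have hcs : (0:ℝ) < c - σ := by linarith
    set T : ℝ := max (max T₀ T₁) ((2 * K + 1) / (c - σ)) with hTdef
    have h3 : (0:ℝ) ≤ T := hT₀0.trans ((le_max_left T₀ T₁).trans (le_max_left _ _))
    have h4 : T₁ ≤ T := (le_max_right T₀ T₁).trans (le_max_left _ _)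
    have h5 : (2 * K + 1) / (c - σ) ≤ T := le_max_right _ _
    have hid := hkey T
    have hexpT : Real.exp (-(σ * T)) ≤ 1 := by
      rw [show (1:ℝ) = Real.exp 0 from Real.exp_zero.symm]
      exact Real.exp_le_exp.2 (by nlinarith)
    have hbound1 : Real.exp (-(σ * T)) * (∫ u in (0:ℝ)..T, (f u - σ) * Real.exp (σ * u)) ≤ K :=
      calc Real.exp (-(σ * T)) * (∫ u in (0:ℝ)..T, (f u - σ) * Real.exp (σ * u))
          ≤ Real.exp (-(σ * T)) * K :=
            mul_le_mul_of_nonneg_left (hK T h3) (Real.exp_pos _).le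
        _ ≤ 1 * K := mul_le_mul_of_nonneg_right hexpT hK0
        _ = K := one_mul K
    have hbound2 : (∫ t in (0:ℝ)..T, σ * Real.exp (-(σ * t))
        * ∫ u in (0:ℝ)..t, (f u - σ) * Real.exp (σ * u)) ≤ K := by
      have hcont1 : Continuous fun t => σ * Real.exp (-(σ * t))
          * ∫ u in (0:ℝ)..t, (f u - σ) * Real.exp (σ * u) :=
        (continuous_const.mul ((continuous_const.mul continuous_id).neg.rexp)).mul hFc
      have hcont2 : Continuous fun t : ℝ => σ * Real.exp (-(σ * t)) * K :=
        (continuous_const.mul ((continuous_const.mul continuous_id).neg.rexp)).mul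
          continuous_const
      have hmono : (∫ t in (0:ℝ)..T, σ * Real.exp (-(σ * t))
          * ∫ u in (0:ℝ)..t, (f u - σ) * Real.exp (σ * u))
          ≤ ∫ t in (0:ℝ)..T, σ * Real.exp (-(σ * t)) * K := by
        apply intervalIntegral.integral_mono_on h3 (hcont1.intervalIntegrable 0 T)
          (hcont2.intervalIntegrable 0 T)
        intro s hs
        exact mul_le_mul_of_nonneg_left (hK s hs.1)
          (mul_nonneg hσ (Real.exp_pos _).le)
      have hcalc : (∫ t in (0:ℝ)..T, σ * Real.exp (-(σ * t)) * K)
          = K - Real.exp (-(σ * T)) * K := by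
        have hder : ∀ t ∈ uIcc (0:ℝ) T, HasDerivAt (fun s => -(Real.exp (-(σ * s)) * K))
            (σ * Real.exp (-(σ * t)) * K) t := by
          intro t _
          have h1 : HasDerivAt (fun s : ℝ => -(σ * s)) (-σ) t := by
            simpa using ((hasDerivAt_id t).const_mul (-σ))
          have h2 := (h1.exp.mul_const K).neg
          exact h2.congr_deriv (by ring)
        have hFTC := intervalIntegral.integral_eq_sub_of_hasDerivAt hder
          (hcont2.intervalIntegrable 0 T)
        simp only [mul_zero, neg_zero, Real.exp_zero, one_mul] at hFTC
        linarith [hFTC]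
      have : K - Real.exp (-(σ * T)) * K ≤ K := by
        nlinarith [(Real.exp_pos (-(σ * T))).le]
      linarith
    have hAT := hT₁ T h4
    have h6 : 2 * K + 1 ≤ c * T - σ * T := by
      rw [div_le_iff₀ hcs] at h5
      nlinarith
    linarith
  refine ⟨part1, fun t => ?_⟩
  obtain ⟨t', hM, htt'⟩ := ((part1 (Real.exp (σ * t)
      + ∫ u in (0:ℝ)..t, (f u - σ) * Real.exp (σ * u))).and_eventually
      (eventually_gt_atTop t)).exists
  refine ⟨t', htt', ?_⟩
  have hadd := intervalIntegral.integral_add_adjacent_intervals (hgInt 0 t) (hgInt t t')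
  linarith
end
end

section
/- Suppose f : ℝ → ℝ is locally integrable with f(t) − σ > 0 for almost every t ∈ ℝ, where σ ≥ 0. If the firing map value Φ(t₀) is defined (satisfying e^{σt₀} = ∫_{t₀}^{Φ(t₀)} (f(u)−σ) e^{σu} du), then for every s < t₀ the value Φ(s) is defined and Φ(s) < Φ(t₀). In other words, the firing map is strictly increasing where defined. -/
open MeasureTheory Filter Set intervalIntegral

noncomputable section

theorem stmt2 (σ : ℝ) (hσ : 0 ≤ σ) (f : ℝ → ℝ) (hf : LocallyIntegrable f volume)
    (hpos : ∀ᵐ t, σ < f t) (t₀ y₀ : ℝ) (h : FiringEq σ f t₀ y₀) :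
    ∀ s < t₀, ∃ y, FiringEq σ f s y ∧ y < y₀ := by
  intro s hs
  set g : ℝ → ℝ := fun u => (f u - σ) * Real.exp (σ * u) with hg
  have hint : ∀ a b : ℝ, IntervalIntegrable g volume a b := by
    intro a b
    have h1 : IntervalIntegrable (fun u => f u - σ) volume a b :=
      ((hf.sub (locallyIntegrable_const σ)).integrableOn_isCompact
        (isCompact_uIcc (a:=a) (b:=b))).intervalIntegrable
    exact h1.mul_continuousOn (Continuous.continuousOn (by continuity))
  have hposint : ∀ a b : ℝ, a < b → 0 < ∫ u in a..b, g u := by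
    intro a b hab
    have hgpos : ∀ᵐ t, 0 < g t := by
      filter_upwards [hpos] with t ht
      exact mul_pos (by linarith) (Real.exp_pos _)
    rw [intervalIntegral.integral_of_le hab.le]
    rw [setIntegral_pos_iff_support_of_nonneg_ae
      (ae_restrict_of_ae (hgpos.mono fun t ht => ht.le)) (hint a b).1]
    have heq : (Function.support g ∩ Ioc a b : Set ℝ) =ᵐ[volume] (Ioc a b : Set ℝ) := by
      rw [Filter.eventuallyEq_set]
      filter_upwards [hgpos] with t ht
      simp [Function.mem_support, ht.ne']
    rw [measure_congr heq, Real.volume_Ioc]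
    exact ENNReal.ofReal_pos.2 (by linarith)
  obtain ⟨⟨hty, heq0⟩, _⟩ := h
  set F : ℝ → ℝ := fun t' => ∫ u in s..t', g u with hF
  have hFcont : Continuous F := intervalIntegral.continuous_primitive hint s
  -- F y₀ > exp (σ * s)
  have hsplit : F y₀ = (∫ u in s..t₀, g u) + ∫ u in t₀..y₀, g u :=
    (intervalIntegral.integral_add_adjacent_intervals (hint s t₀) (hint t₀ y₀)).symm
  have hFy₀ : Real.exp (σ * s) < F y₀ := by
    have h1 : 0 < ∫ u in s..t₀, g u := hposint s t₀ hs
    have h2 : Real.exp (σ * s) ≤ Real.exp (σ * t₀) :=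
      Real.exp_le_exp.2 (by nlinarith)
    rw [hsplit, ← heq0]
    linarith
  have hFs : F s = 0 := intervalIntegral.integral_same
  -- IVT
  have hsy : s < y₀ := lt_trans hs hty
  have hmem : Real.exp (σ * s) ∈ Icc (F s) (F y₀) :=
    ⟨by rw [hFs]; exact (Real.exp_pos _).le, hFy₀.le⟩
  obtain ⟨c, hc, hFc⟩ := intermediate_value_Icc hsy.le hFcont.continuousOn hmem
  have hsc : s < c := by
    rcases lt_or_eq_of_le hc.1 with h' | h'
    · exact h'
    · exfalso; rw [← h', hFs] at hFc; exact (Real.exp_pos _).ne hFc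
  have hcy : c < y₀ := by
    rcases lt_or_eq_of_le hc.2 with h' | h'
    · exact h'
    · exfalso; rw [h'] at hFc; linarith
  refine ⟨c, ⟨⟨hsc, hFc.symm⟩, ?_⟩, hcy⟩
  rintro t' ⟨hst', ht'⟩
  by_contra hlt
  push_neg at hlt
  have : 0 < ∫ u in t'..c, g u := hposint t' c hlt
  have hsplit2 : F c = F t' + ∫ u in t'..c, g u :=
    (intervalIntegral.integral_add_adjacent_intervals (hint s t') (hint t' c)).symm
  rw [hFc] at hsplit2
  have : F t' = Real.exp (σ * s) := ht'.symm
  linarith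
end
end

section
/- Let σ ≥ 0, ς > 0 and let f : ℝ → ℝ be locally integrable with f(t) − σ ≥ ς for a.e. t. Then the displacement map Ψ(t) = Φ(t) − t of the LIF firing map satisfies 0 < Ψ(t) ≤ 1/ς for all t ∈ ℝ; in particular Ψ is bounded. -/
open MeasureTheory Filter Set intervalIntegral

noncomputable section

theorem stmt3 (σ ς : ℝ) (hσ : 0 ≤ σ) (hς : 0 < ς) (f : ℝ → ℝ)
    (hf : LocallyIntegrable f volume) (hb : ∀ᵐ t, σ + ς ≤ f t)
    (Φ : ℝ → ℝ) (hΦ : ∀ t, FiringEq σ f t (Φ t)) :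
    ∀ t, 0 < Φ t - t ∧ Φ t - t ≤ 1 / ς := by
  intro t
  obtain ⟨⟨hlt, heq⟩, _⟩ := hΦ t
  refine ⟨by linarith, ?_⟩
  set t' := Φ t with ht'
  have hab : t ≤ t' := hlt.le
  -- integrability
  have hint : IntervalIntegrable (fun u => (f u - σ) * Real.exp (σ * u)) volume t t' := by
    have h1 : IntegrableOn (fun u => (f u - σ) * Real.exp (σ * u)) (Set.uIcc t t') volume :=
      ((hf.sub (locallyIntegrable_const σ)).integrableOn_isCompact isCompact_uIcc).mul_continuousOn
        ((Real.continuous_exp.comp (continuous_const.mul continuous_id)).continuousOn)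
        isCompact_uIcc
    exact h1.intervalIntegrable
  have hconst : IntervalIntegrable (fun _ : ℝ => ς * Real.exp (σ * t)) volume t t' :=
    intervalIntegrable_const
  have hmono : (∫ u in t..t', (ς * Real.exp (σ * t))) ≤
      ∫ u in t..t', (f u - σ) * Real.exp (σ * u) := by
    apply integral_mono_ae_restrict hab hconst hint
    have h1 : ∀ᵐ u ∂(volume.restrict (Icc t t')), σ + ς ≤ f u := ae_restrict_of_ae hb
    filter_upwards [h1, ae_restrict_mem measurableSet_Icc] with u hu hu'
    have h2 : Real.exp (σ * t) ≤ Real.exp (σ * u) :=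
      Real.exp_le_exp.mpr (mul_le_mul_of_nonneg_left hu'.1 hσ)
    have h3 : ς ≤ f u - σ := by linarith
    calc ς * Real.exp (σ * t) ≤ (f u - σ) * Real.exp (σ * t) := by
          apply mul_le_mul_of_nonneg_right h3 (Real.exp_pos _).le
      _ ≤ (f u - σ) * Real.exp (σ * u) := by
          apply mul_le_mul_of_nonneg_left h2 (by linarith)
  rw [intervalIntegral.integral_const, ← heq, smul_eq_mul] at hmono
  have hexp : 0 < Real.exp (σ * t) := Real.exp_pos _
  rw [le_div_iff₀ hς]
  nlinarith
end
end

section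
/- Let σ ≥ 0 and let f : ℝ → ℝ be locally integrable and ω-periodic (ω > 0). If the firing map Φ of the LIF model driven by f is well-defined for every t ∈ ℝ, then Φ(t + ω) = Φ(t) + ω for all t ∈ ℝ; consequently the displacement Ψ(t) = Φ(t) − t is ω-periodic. -/
open MeasureTheory Filter Set intervalIntegral

noncomputable section

lemma sInf_image_add (A : Set ℝ) (c : ℝ) (hA : A.Nonempty) (hB : BddBelow A) :
    sInf ((fun x => x + c) '' A) = sInf A + c := by
  obtain ⟨b, hb⟩ := hB
  have hB' : BddBelow ((fun x => x + c) '' A) := by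
    refine ⟨b + c, ?_⟩
    rintro y ⟨x, hx, rfl⟩
    exact add_le_add_left (hb hx) c
  apply le_antisymm
  · rw [← sub_le_iff_le_add]
    apply le_csInf hA
    intro x hx
    rw [sub_le_iff_le_add]
    exact csInf_le hB' ⟨x, hx, rfl⟩
  · apply le_csInf (hA.image _)
    rintro y ⟨x, hx, rfl⟩
    exact add_le_add_left (csInf_le ⟨b, hb⟩ hx) c

theorem stmt6 (σ ω : ℝ) (hσ : 0 ≤ σ) (hω : 0 < ω) (f : ℝ → ℝ)
    (hf : LocallyIntegrable f volume) (hper : Function.Periodic f ω)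
    (hwd : ∀ t, (FiringSet σ f t).Nonempty) :
    (∀ t, sInf (FiringSet σ f (t + ω)) = sInf (FiringSet σ f t) + ω) ∧
      Function.Periodic (fun t => sInf (FiringSet σ f t) - t) ω := by
  have hint : ∀ s b : ℝ, (∫ u in s + ω..b + ω, (f u - σ) * Real.exp (σ * u))
      = Real.exp (σ * ω) * ∫ u in s..b, (f u - σ) * Real.exp (σ * u) := by
    intro s b
    rw [← intervalIntegral.integral_comp_add_right (fun u => (f u - σ) * Real.exp (σ * u)) ω,
      ← intervalIntegral.integral_const_mul]
    congr 1
    ext u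
    rw [hper u, mul_add, Real.exp_add]
    ring
  have key : ∀ s : ℝ, FiringSet σ f (s + ω) = (fun x => x + ω) '' FiringSet σ f s := by
    intro s
    ext t'
    simp only [FiringSet, Set.mem_image, Set.mem_setOf_eq]
    constructor
    · rintro ⟨h1, h2⟩
      refine ⟨t' - ω, ⟨by linarith, ?_⟩, by ring⟩
      have := hint s (t' - ω)
      rw [sub_add_cancel] at this
      rw [this, mul_add, Real.exp_add] at h2
      exact le_of_mul_le_mul_left (by linarith [h2]) (Real.exp_pos (σ * ω))
    · rintro ⟨x, ⟨h1, h2⟩, rfl⟩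
      refine ⟨by linarith, ?_⟩
      rw [hint s x, mul_add, Real.exp_add, mul_comm (Real.exp (σ * s))]
      exact mul_le_mul_of_nonneg_left h2 (Real.exp_pos (σ * ω)).le
  have main : ∀ t, sInf (FiringSet σ f (t + ω)) = sInf (FiringSet σ f t) + ω := by
    intro t
    rw [key t]
    exact sInf_image_add _ _ (hwd t) ⟨t, fun x hx => hx.1.le⟩
  refine ⟨main, fun t => ?_⟩
  simp only [main t]
  ring
end
end

section
/- Let σ ≥ 0 and let f : ℝ → ℝ be limit-periodic (a uniform limit on ℝ of continuous periodic functions) with f(t) − σ > ς for all t, for some ς > 0. Then the displacement map Ψ of the firing map of the LIF model driven by f is limit-periodic. -/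
open MeasureTheory Filter Set intervalIntegral

noncomputable section

namespace LIFaux

variable {σ ς : ℝ}


lemma cont_exp (σ : ℝ) : Continuous (fun u : ℝ => Real.exp (σ * u)) := by fun_prop

lemma cont_integrand {g : ℝ → ℝ} (hg : Continuous g) (σ : ℝ) :
    Continuous (fun u => (g u - σ) * Real.exp (σ * u)) := by fun_prop

lemma intInt {g : ℝ → ℝ} (hg : Continuous g) (σ a b : ℝ) :
    IntervalIntegrable (fun u => (g u - σ) * Real.exp (σ * u)) volume a b :=
  (cont_integrand hg σ).intervalIntegrable a b

lemma int_lb {g : ℝ → ℝ} (hg : Continuous g) (hσ : 0 ≤ σ) {c : ℝ} (hc : 0 ≤ c)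
    (hgc : ∀ u, c ≤ g u - σ) {a b : ℝ} (hab : a ≤ b) :
    c * Real.exp (σ * a) * (b - a) ≤ ∫ u in a..b, (g u - σ) * Real.exp (σ * u) := by
  have h1 : (∫ _ in a..b, c * Real.exp (σ * a)) = c * Real.exp (σ * a) * (b - a) := by
    simp [intervalIntegral.integral_const, smul_eq_mul]; ring
  rw [← h1]
  apply intervalIntegral.integral_mono_on hab intervalIntegrable_const (intInt hg σ a b)
  intro u hu
  have h2 : Real.exp (σ * a) ≤ Real.exp (σ * u) :=
    Real.exp_le_exp.mpr (mul_le_mul_of_nonneg_left hu.1 hσ)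
  nlinarith [Real.exp_pos (σ * u), hgc u, Real.exp_pos (σ * a)]

lemma int_ub {g : ℝ → ℝ} (hg : Continuous g) (hσ : 0 ≤ σ) {C : ℝ} (hC : 0 ≤ C)
    (hgC : ∀ u, g u - σ ≤ C) {a b : ℝ} (hab : a ≤ b) :
    (∫ u in a..b, (g u - σ) * Real.exp (σ * u)) ≤ C * Real.exp (σ * b) * (b - a) := by
  have h1 : (∫ _ in a..b, C * Real.exp (σ * b)) = C * Real.exp (σ * b) * (b - a) := by
    simp [intervalIntegral.integral_const, smul_eq_mul]; ring
  rw [← h1]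
  apply intervalIntegral.integral_mono_on hab (intInt hg σ a b) intervalIntegrable_const
  intro u hu
  have h2 : Real.exp (σ * u) ≤ Real.exp (σ * b) :=
    Real.exp_le_exp.mpr (mul_le_mul_of_nonneg_left hu.2 hσ)
  nlinarith [Real.exp_pos (σ * u), hgC u, Real.exp_pos (σ * b)]

lemma exp_int_le {g : ℝ → ℝ} (hg : Continuous g) {c : ℝ} (hc : 0 < c)
    (hgc : ∀ u, c ≤ g u - σ) {a b : ℝ} (hab : a ≤ b) :
    c * (∫ u in a..b, Real.exp (σ * u)) ≤ ∫ u in a..b, (g u - σ) * Real.exp (σ * u) := by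
  rw [← intervalIntegral.integral_const_mul]
  apply intervalIntegral.integral_mono_on hab
    ((continuous_const.mul (cont_exp σ)).intervalIntegrable a b)
    (intInt hg σ a b)
  intro u _
  have := Real.exp_pos (σ * u)
  show c * Real.exp (σ * u) ≤ (g u - σ) * Real.exp (σ * u)
  nlinarith [hgc u]

lemma diff_int_le {f g : ℝ → ℝ} (hf : Continuous f) (hg : Continuous g) {δ : ℝ}
    (hδ : ∀ u, |f u - g u| ≤ δ) {a b : ℝ} (hab : a ≤ b) :
    |(∫ u in a..b, (f u - σ) * Real.exp (σ * u)) - ∫ u in a..b, (g u - σ) * Real.exp (σ * u)|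
      ≤ δ * ∫ u in a..b, Real.exp (σ * u) := by
  rw [← intervalIntegral.integral_sub (intInt hf σ a b) (intInt hg σ a b)]
  calc |∫ u in a..b, ((f u - σ) * Real.exp (σ * u) - (g u - σ) * Real.exp (σ * u))|
      ≤ ∫ u in a..b, |(f u - σ) * Real.exp (σ * u) - (g u - σ) * Real.exp (σ * u)| :=
        intervalIntegral.abs_integral_le_integral_abs hab
    _ ≤ ∫ u in a..b, δ * Real.exp (σ * u) := by
        apply intervalIntegral.integral_mono_on hab
        · exact (((cont_integrand hf σ).sub (cont_integrand hg σ)).abs).intervalIntegrable a b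
        · exact (continuous_const.mul (cont_exp σ)).intervalIntegrable a b
        · intro u _
          have h1 : (f u - σ) * Real.exp (σ * u) - (g u - σ) * Real.exp (σ * u)
              = (f u - g u) * Real.exp (σ * u) := by ring
          rw [h1, abs_mul, abs_of_pos (Real.exp_pos _)]
          exact mul_le_mul_of_nonneg_right (hδ u) (Real.exp_pos _).le
    _ = δ * ∫ u in a..b, Real.exp (σ * u) := intervalIntegral.integral_const_mul _ _


/-- Existence of the firing time. -/
lemma fire_exists (hσ : 0 ≤ σ) {c : ℝ} (hc : 0 < c) {g : ℝ → ℝ} (hg : Continuous g)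
    (hgc : ∀ u, c ≤ g u - σ) (t : ℝ) : ∃ y, FiringEq σ g t y := by
  set H : ℝ → ℝ := fun s => ∫ u in t..s, (g u - σ) * Real.exp (σ * u) with hH
  have hHc : Continuous H :=
    intervalIntegral.continuous_primitive (fun a b => intInt hg σ a b) t
  have hT : t ≤ t + 1 / c := by have := one_div_pos.mpr hc; linarith
  have hHT : Real.exp (σ * t) ≤ H (t + 1 / c) := by
    have := int_lb hg hσ hc.le hgc hT
    have h1 : c * Real.exp (σ * t) * (t + 1 / c - t) = Real.exp (σ * t) := by
      field_simp
      ring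
    rw [h1] at this; exact this
  have hivt := intermediate_value_Icc hT hHc.continuousOn
  have hmem : Real.exp (σ * t) ∈ Icc (H t) (H (t + 1 / c)) := by
    constructor
    · simp [hH, intervalIntegral.integral_same, (Real.exp_pos _).le]
    · exact hHT
  obtain ⟨y, hy, hHy⟩ := hivt hmem
  have hty : t < y := by
    rcases eq_or_lt_of_le hy.1 with h | h
    · exfalso; rw [← h] at hHy; simp [hH] at hHy
      exact absurd hHy.symm (ne_of_gt (Real.exp_pos _))
    · exact h
  refine ⟨y, ⟨hty, hHy.symm⟩, ?_⟩
  intro z hz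
  by_contra hzy
  push_neg at hzy
  have hzt : t < z := hz.1
  have h2 : H y - H z = ∫ u in z..y, (g u - σ) * Real.exp (σ * u) := by
    rw [hH]
    have := intervalIntegral.integral_add_adjacent_intervals (intInt hg σ t z) (intInt hg σ z y)
    linarith [this]
  have h3 : 0 < ∫ u in z..y, (g u - σ) * Real.exp (σ * u) := by
    have := int_lb hg hσ hc.le hgc hzy.le
    nlinarith [mul_pos (mul_pos hc (Real.exp_pos (σ * z))) (sub_pos.mpr hzy)]
  have h4 : H z = Real.exp (σ * t) := hz.2.symm
  rw [h4, hHy] at h2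
  simp at h2
  linarith

/-- Shifting by a period. -/
lemma fire_shift (hσ : 0 ≤ σ) {g : ℝ → ℝ} {p : ℝ} (hper : Function.Periodic g p)
    {t y : ℝ} (h : FiringEq σ g t y) : FiringEq σ g (t + p) (y + p) := by
  have key : ∀ a b : ℝ, (∫ u in (a+p)..(b+p), (g u - σ) * Real.exp (σ * u))
      = Real.exp (σ * p) * ∫ u in a..b, (g u - σ) * Real.exp (σ * u) := by
    intro a b
    rw [← intervalIntegral.integral_comp_add_right (fun u => (g u - σ) * Real.exp (σ * u)) p]
    rw [← intervalIntegral.integral_const_mul]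
    congr 1; ext u
    rw [hper u]
    rw [mul_add, Real.exp_add]
    ring
  constructor
  · constructor
    · linarith [h.1.1]
    · rw [key t y, ← h.1.2, mul_add, Real.exp_add]; ring
  · intro z hz
    have hz1 : t < z - p := by linarith [hz.1]
    have hz2 : Real.exp (σ * t) = ∫ u in t..(z-p), (g u - σ) * Real.exp (σ * u) := by
      have h5 : z = (z - p) + p := by ring
      have h6 := hz.2
      rw [h5, key t (z - p)] at h6
      have h7 : Real.exp (σ * (t + p)) = Real.exp (σ * p) * Real.exp (σ * t) := by
        rw [mul_add, Real.exp_add]; ring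
      rw [h7] at h6
      exact mul_left_cancel₀ (ne_of_gt (Real.exp_pos (σ * p))) h6
    have := h.2 ⟨hz1, hz2⟩
    linarith


/-- Stability of the firing time under uniform perturbation. -/
lemma fire_stab (hσ : 0 ≤ σ) (hς : 0 < ς) {f g : ℝ → ℝ} (hf : Continuous f) (hg : Continuous g)
    (hfl : ∀ u, ς ≤ f u - σ) (hgl : ∀ u, ς / 2 ≤ g u - σ) {δ : ℝ}
    (hδ : ∀ u, |f u - g u| ≤ δ) {t y z : ℝ}
    (hy : FiringEq σ f t y) (hz : FiringEq σ g t z) : |y - z| ≤ 2 * δ / ς ^ 2 := by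
  have hty : t < y := hy.1.1
  have htz : t < z := hz.1.1
  have hyE : Real.exp (σ * t) = ∫ u in t..y, (f u - σ) * Real.exp (σ * u) := hy.1.2
  have hzE : Real.exp (σ * t) = ∫ u in t..z, (g u - σ) * Real.exp (σ * u) := hz.1.2
  have hE : (0:ℝ) < Real.exp (σ * t) := Real.exp_pos _
  have hδ0 : 0 ≤ δ := le_trans (abs_nonneg _) (hδ t)
  -- ∫_t^z exp ≤ (2/ς) E
  have hexpz : ∫ u in t..z, Real.exp (σ * u) ≤ (2 / ς) * Real.exp (σ * t) := by
    have h1 := exp_int_le (σ := σ) hg (by linarith : (0:ℝ) < ς / 2) hgl htz.le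
    rw [← hzE] at h1
    rw [div_mul_eq_mul_div, le_div_iff₀ hς]
    nlinarith
  -- |∫_t^z (f-σ)e - E| ≤ (2δ/ς) E
  have hdiff : |(∫ u in t..z, (f u - σ) * Real.exp (σ * u)) - Real.exp (σ * t)|
      ≤ (2 * δ / ς) * Real.exp (σ * t) := by
    have h1 := diff_int_le (σ := σ) hf hg hδ htz.le
    rw [← hzE] at h1
    have h2 : δ * ∫ u in t..z, Real.exp (σ * u) ≤ (2 * δ / ς) * Real.exp (σ * t) := by
      have := mul_le_mul_of_nonneg_left hexpz hδ0
      calc δ * ∫ u in t..z, Real.exp (σ * u) ≤ δ * ((2 / ς) * Real.exp (σ * t)) := this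
        _ = (2 * δ / ς) * Real.exp (σ * t) := by ring
    exact le_trans h1 h2
  have hkey : ς * Real.exp (σ * t) * |y - z| ≤ (2 * δ / ς) * Real.exp (σ * t) := by
    rcases le_total y z with h | h
    · -- z ≥ y
      have hsplit : (∫ u in t..z, (f u - σ) * Real.exp (σ * u)) - Real.exp (σ * t)
          = ∫ u in y..z, (f u - σ) * Real.exp (σ * u) := by
        rw [hyE]
        have := intervalIntegral.integral_add_adjacent_intervals (intInt hf σ t y) (intInt hf σ y z)
        linarith
      have hlow := int_lb hf hσ hς.le hfl h
      have hexp : Real.exp (σ * t) ≤ Real.exp (σ * y) :=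
        Real.exp_le_exp.mpr (mul_le_mul_of_nonneg_left hty.le hσ)
      have habs : |y - z| = z - y := by rw [abs_sub_comm]; exact abs_of_nonneg (by linarith)
      rw [habs]
      calc ς * Real.exp (σ * t) * (z - y) ≤ ς * Real.exp (σ * y) * (z - y) := by nlinarith [mul_nonneg (mul_nonneg hς.le (sub_nonneg.mpr h)) (sub_nonneg.mpr hexp)]
        _ ≤ ∫ u in y..z, (f u - σ) * Real.exp (σ * u) := hlow
        _ = (∫ u in t..z, (f u - σ) * Real.exp (σ * u)) - Real.exp (σ * t) := hsplit.symm
        _ ≤ |(∫ u in t..z, (f u - σ) * Real.exp (σ * u)) - Real.exp (σ * t)| := le_abs_self _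
        _ ≤ (2 * δ / ς) * Real.exp (σ * t) := hdiff
    · -- y ≥ z
      have hsplit : Real.exp (σ * t) - (∫ u in t..z, (f u - σ) * Real.exp (σ * u))
          = ∫ u in z..y, (f u - σ) * Real.exp (σ * u) := by
        rw [hyE]
        have := intervalIntegral.integral_add_adjacent_intervals (intInt hf σ t z) (intInt hf σ z y)
        linarith
      have hlow := int_lb hf hσ hς.le hfl h
      have hexp : Real.exp (σ * t) ≤ Real.exp (σ * z) :=
        Real.exp_le_exp.mpr (mul_le_mul_of_nonneg_left htz.le hσ)
      have habs : |y - z| = y - z := abs_of_nonneg (by linarith)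
      rw [habs]
      calc ς * Real.exp (σ * t) * (y - z) ≤ ς * Real.exp (σ * z) * (y - z) := by nlinarith [mul_nonneg (mul_nonneg hς.le (sub_nonneg.mpr h)) (sub_nonneg.mpr hexp)]
        _ ≤ ∫ u in z..y, (f u - σ) * Real.exp (σ * u) := hlow
        _ = Real.exp (σ * t) - (∫ u in t..z, (f u - σ) * Real.exp (σ * u)) := hsplit.symm
        _ ≤ |(∫ u in t..z, (f u - σ) * Real.exp (σ * u)) - Real.exp (σ * t)| := by
            rw [abs_sub_comm]; exact le_abs_self _
        _ ≤ (2 * δ / ς) * Real.exp (σ * t) := hdiff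
  -- conclude
  have h2 : ς * |y - z| ≤ 2 * δ / ς := by
    have := hkey
    nlinarith [abs_nonneg (y - z)]
  have h3 := mul_le_mul_of_nonneg_left h2 hς.le
  have h4 : ς * (2 * δ / ς) = 2 * δ := by field_simp
  rw [le_div_iff₀ (by positivity : (0:ℝ) < ς ^ 2)]
  nlinarith


/-- A continuous periodic function is bounded above. -/
lemma periodic_bdd {g : ℝ → ℝ} (hg : Continuous g) {p : ℝ} (hp : 0 < p)
    (hper : Function.Periodic g p) : ∃ C, ∀ u, g u ≤ C := by
  obtain ⟨C, hC⟩ := (isCompact_Icc (a := (0:ℝ)) (b := p)).exists_bound_of_continuousOn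
    hg.continuousOn
  refine ⟨C, fun u => ?_⟩
  obtain ⟨v, hv, hvu⟩ := hper.exists_mem_Ico₀ hp u
  rw [hvu]
  calc g v ≤ |g v| := le_abs_self _
    _ = ‖g v‖ := rfl
    _ ≤ C := hC v ⟨hv.1, hv.2.le⟩

/-- Monotonicity and Lipschitz-type continuity of the firing map. -/
lemma fire_cont (hσ : 0 ≤ σ) {c C : ℝ} (hc : 0 < c) {g : ℝ → ℝ} (hg : Continuous g)
    (hgc : ∀ u, c ≤ g u - σ) (hgC : ∀ u, g u - σ ≤ C) {G : ℝ → ℝ}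
    (hG : ∀ t, FiringEq σ g t (G t)) : Continuous G := by
  have hC0 : 0 < C := lt_of_lt_of_le hc (le_trans (hgc 0) (hgC 0))
  set F : ℝ → ℝ := fun s => ∫ u in (0:ℝ)..s, (g u - σ) * Real.exp (σ * u) with hF
  have hsplit : ∀ a b : ℝ, F b - F a = ∫ u in a..b, (g u - σ) * Real.exp (σ * u) := by
    intro a b
    have := intervalIntegral.integral_add_adjacent_intervals (intInt hg σ 0 a) (intInt hg σ a b)
    simp only [hF]; linarith
  have hFmono : StrictMono F := by
    intro a b hab
    have h1 := int_lb hg hσ hc.le hgc hab.le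
    have h2 := hsplit a b
    nlinarith [mul_pos (mul_pos hc (Real.exp_pos (σ * a))) (sub_pos.mpr hab)]
  have hFG : ∀ t, F (G t) = F t + Real.exp (σ * t) := by
    intro t
    have := (hG t).1.2
    have h2 := hsplit t (G t)
    linarith
  have hmono : Monotone G := by
    intro a b hab
    rcases eq_or_lt_of_le hab with rfl | hab
    · exact le_rfl
    · have h : F (G a) < F (G b) := by
        rw [hFG a, hFG b]
        have := hFmono hab
        have := Real.exp_le_exp.mpr (mul_le_mul_of_nonneg_left hab.le hσ)
        linarith
      exact (hFmono.lt_iff_lt.mp h).le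
  -- Lipschitz bound on intervals of length ≤ 1
  have hlip : ∀ t s : ℝ, t ≤ s → s ≤ t + 1 →
      G s - G t ≤ ((C + σ) * Real.exp σ / c) * (s - t) := by
    intro t s hts hs1
    have hGts : G t ≤ G s := hmono hts
    have htGt : t < G t := (hG t).1.1
    have h1 : c * Real.exp (σ * t) * (G s - G t)
        ≤ ∫ u in (G t)..(G s), (g u - σ) * Real.exp (σ * u) := by
      have h1a := int_lb hg hσ hc.le hgc hGts
      have h1b : Real.exp (σ * t) ≤ Real.exp (σ * G t) :=
        Real.exp_le_exp.mpr (mul_le_mul_of_nonneg_left htGt.le hσ)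
      nlinarith [mul_nonneg (mul_nonneg hc.le (sub_nonneg.mpr hGts)) (sub_nonneg.mpr h1b)]
    have h2 : (∫ u in (G t)..(G s), (g u - σ) * Real.exp (σ * u))
        = (F s - F t) + (Real.exp (σ * s) - Real.exp (σ * t)) := by
      rw [← hsplit (G t) (G s), hFG s, hFG t]; ring
    have h3 : F s - F t ≤ C * Real.exp (σ * s) * (s - t) := by
      rw [hsplit t s]; exact int_ub hg hσ hC0.le hgC hts
    have h4 : Real.exp (σ * s) - Real.exp (σ * t) ≤ Real.exp (σ * s) * σ * (s - t) := by
      have h5 : 1 + (-(σ * (s - t))) ≤ Real.exp (-(σ * (s - t))) := by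
        have := Real.add_one_le_exp (-(σ * (s - t))); linarith
      have h6 : Real.exp (σ * t) = Real.exp (σ * s) * Real.exp (-(σ * (s - t))) := by
        rw [← Real.exp_add]; ring_nf
      rw [h6]
      nlinarith [Real.exp_pos (σ * s)]
    have h7 : Real.exp (σ * s) ≤ Real.exp (σ * t) * Real.exp σ := by
      rw [← Real.exp_add]
      exact Real.exp_le_exp.mpr (by nlinarith)
    have h8 : c * Real.exp (σ * t) * (G s - G t)
        ≤ (C + σ) * (Real.exp (σ * t) * Real.exp σ) * (s - t) := by
      have hst : 0 ≤ s - t := by linarith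
      nlinarith [Real.exp_pos (σ * s), mul_nonneg (mul_nonneg hC0.le (Real.exp_pos (σ*s)).le) hst,
        mul_nonneg (mul_nonneg hσ (Real.exp_pos (σ*s)).le) hst,
        mul_le_mul_of_nonneg_right h7 (mul_nonneg (add_nonneg hC0.le hσ) hst)]
    have hEt := Real.exp_pos (σ * t)
    rw [div_mul_eq_mul_div, le_div_iff₀ hc]
    nlinarith [Real.exp_pos σ]
  -- continuity
  rw [Metric.continuous_iff]
  intro t ε hε
  set K := (C + σ) * Real.exp σ / c with hK
  have hK0 : 0 < K := by
    apply div_pos _ hc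
    exact mul_pos (by linarith) (Real.exp_pos σ)
  refine ⟨min 1 (ε / (2 * K)), by positivity, fun s hs => ?_⟩
  rw [Real.dist_eq] at hs ⊢
  have hs1 : |s - t| < 1 := lt_of_lt_of_le hs (min_le_left _ _)
  have hs2 : |s - t| < ε / (2 * K) := lt_of_lt_of_le hs (min_le_right _ _)
  have hbound : |G s - G t| ≤ K * |s - t| := by
    rcases le_total t s with h | h
    · have := hlip t s h (by rw [abs_of_nonneg (by linarith : (0:ℝ) ≤ s - t)] at hs1; linarith)
      rw [abs_of_nonneg (sub_nonneg.mpr (hmono h)), abs_of_nonneg (by linarith : (0:ℝ) ≤ s - t)]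
      linarith
    · have := hlip s t h (by rw [abs_of_nonpos (by linarith : s - t ≤ 0)] at hs1; linarith)
      rw [abs_of_nonpos (sub_nonpos.mpr (hmono h)), abs_of_nonpos (by linarith : s - t ≤ 0)]
      linarith
  calc |G s - G t| ≤ K * |s - t| := hbound
    _ < K * (ε / (2 * K)) := by
        apply mul_lt_mul_of_pos_left hs2 hK0
    _ ≤ ε := by rw [mul_div_assoc']; rw [div_le_iff₀ (by linarith)]; nlinarith


end LIFaux

theorem stmt7 (σ ς : ℝ) (hσ : 0 ≤ σ) (hς : 0 < ς) (f : ℝ → ℝ)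
    (hlp : LimitPeriodic f) (hb : ∀ t, σ + ς < f t)
    (Φ : ℝ → ℝ) (hΦ : ∀ t, FiringEq σ f t (Φ t)) :
    LimitPeriodic (fun t => Φ t - t) := by
  classical
  obtain ⟨fn, hfn, hconv⟩ := hlp
  have hf : Continuous f := hconv.continuous (Eventually.of_forall fun n => (hfn n).1).frequently
  have hfl : ∀ u, ς ≤ f u - σ := fun u => by have := hb u; linarith
  set P : ℕ → Prop := fun n => ∀ u, |f u - fn n u| ≤ ς / 2 with hP
  have hlow : ∀ n, P n → ∀ u, ς / 2 ≤ fn n u - σ := by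
    intro n hn u
    have h1 := abs_le.mp (hn u)
    have h2 := hb u
    linarith [h1.1, h1.2]
  have hexist : ∀ n, P n → ∀ t, ∃ y, FiringEq σ (fn n) t y := fun n hn t =>
    LIFaux.fire_exists hσ (by linarith : (0:ℝ) < ς / 2) (hfn n).1 (hlow n hn) t
  choose Gm hGm using hexist
  set gn : ℕ → ℝ → ℝ := fun n => if h : P n then (fun t => Gm n h t - t) else (fun _ => 0)
    with hgn
  refine ⟨gn, ?_, ?_⟩
  · intro n
    by_cases h : P n
    · obtain ⟨p, hp0, hper⟩ := (hfn n).2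
      have hcontfn := (hfn n).1
      obtain ⟨C, hC⟩ := LIFaux.periodic_bdd hcontfn hp0 hper
      constructor
      · simp only [hgn, dif_pos h]
        exact (LIFaux.fire_cont hσ (by linarith : (0:ℝ) < ς / 2) hcontfn (hlow n h)
          (fun u => by linarith [hC u] : ∀ u, fn n u - σ ≤ C - σ) (hGm n h)).sub continuous_id
      · refine ⟨p, hp0, fun x => ?_⟩
        simp only [hgn, dif_pos h]
        have hshift := LIFaux.fire_shift hσ hper (hGm n h x)
        have huniq : Gm n h (x + p) = Gm n h x + p := (hGm n h (x + p)).unique hshift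
        rw [huniq]; ring
    · simp only [hgn, dif_neg h]
      exact ⟨continuous_const, 1, one_pos, fun x => rfl⟩
  · rw [Metric.tendstoUniformly_iff]
    intro ε hε
    set δ : ℝ := min (ς / 2) (ς ^ 2 * ε / 4) with hδdef
    have hδ0 : 0 < δ := lt_min (by linarith) (by positivity)
    have hev := Metric.tendstoUniformly_iff.mp hconv δ hδ0
    filter_upwards [hev] with n hn t
    have hδ' : ∀ u, |f u - fn n u| ≤ δ := by
      intro u
      have := hn u
      rw [Real.dist_eq] at this
      exact this.le
    have hPn : P n := fun u => le_trans (hδ' u) (min_le_left _ _)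
    have hstab := LIFaux.fire_stab hσ hς hf (hfn n).1 hfl (hlow n hPn) hδ'
      (hΦ t) (hGm n hPn t)
    have hδ2 : δ ≤ ς ^ 2 * ε / 4 := min_le_right _ _
    have hbd : 2 * δ / ς ^ 2 ≤ ε / 2 := by
      rw [div_le_div_iff₀ (by positivity) (by norm_num)]
      nlinarith
    simp only [hgn, dif_pos hPn]
    rw [Real.dist_eq]
    have heq : |(Φ t - t) - (Gm n hPn t - t)| = |Φ t - Gm n hPn t| := by ring_nf
    rw [heq]
    linarith
end
end

section
/- Let f : ℝ → ℝ be locally integrable, μ-almost periodic and nonnegative a.e. If the mean value M{f} = lim_{T→+∞} (1/T)∫_0^T f(u) du exists and is 0, then f(t) = 0 for almost every t ∈ ℝ. -/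
open MeasureTheory Filter Set intervalIntegral

noncomputable section

theorem stmt10 (f : ℝ → ℝ) (hf : LocallyIntegrable f volume) (hap : MuAP f)
    (hpos : ∀ᵐ t, 0 ≤ f t)
    (hmean : Tendsto (fun T => (1 / T) * ∫ u in (0:ℝ)..T, f u) atTop (nhds 0)) :
    ∀ᵐ t, f t = 0 := by
  by_contra hcon
  obtain ⟨g, hgm, hfg⟩ : ∃ g : ℝ → ℝ, Measurable g ∧ f =ᵐ[volume] g := by
    have hm := hf.aestronglyMeasurable.aemeasurable
    exact ⟨hm.mk f, hm.measurable_mk, hm.ae_eq_mk⟩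
  have hgpos : ∀ᵐ t, 0 ≤ g t := by
    filter_upwards [hpos, hfg] with t h1 h2; rw [← h2]; exact h1
  have hgne : ¬ ∀ᵐ t, g t = 0 := by
    intro h; exact hcon (by filter_upwards [hfg, h] with t h1 h2; rw [h1, h2])
  -- find η > 0 and u with A of positive measure
  have hne : volume {t | g t ≠ 0} ≠ 0 := by
    intro h; exact hgne (by rw [ae_iff]; exact h)
  have hneg0 : volume {t | g t < 0} = 0 := by
    have := hgpos; rw [ae_iff] at this
    have : {t | g t < 0} = {t | ¬ 0 ≤ g t} := by ext t; simp
    rw [this]; rwa [ae_iff] at hgpos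
  have hposset : volume {t | 0 < g t} ≠ 0 := by
    intro h
    apply hne
    have hsub : {t | g t ≠ 0} ⊆ {t | g t < 0} ∪ {t | 0 < g t} := by
      intro t ht; rcases lt_or_gt_of_ne ht with h1 | h1
      · exact Or.inl h1
      · exact Or.inr h1
    exact le_antisymm (le_trans (measure_mono hsub)
      (le_trans (measure_union_le _ _) (by rw [hneg0, h, add_zero]))) zero_le
  obtain ⟨n0, hn0⟩ : ∃ n : ℕ, volume {t | (1:ℝ)/(n+1) ≤ g t} ≠ 0 := by
    by_contra h
    push_neg at h
    apply hposset
    have hcover : {t | 0 < g t} ⊆ ⋃ n : ℕ, {t | (1:ℝ)/(n+1) ≤ g t} := by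
      intro t ht
      obtain ⟨n, hn⟩ := exists_nat_one_div_lt (K := ℝ) ht
      exact Set.mem_iUnion.2 ⟨n, le_of_lt hn⟩
    exact le_antisymm (le_trans (measure_mono hcover)
      (le_of_eq (measure_iUnion_null h))) zero_le
  set η : ℝ := (1:ℝ)/(n0+1) with hηdef
  have hη : 0 < η := by positivity
  obtain ⟨k, hk⟩ : ∃ k : ℤ, volume {t ∈ Set.Icc (k:ℝ) (k+1) | η ≤ g t} ≠ 0 := by
    by_contra h
    push_neg at h
    apply hn0
    have hcover : {t | η ≤ g t} ⊆ ⋃ k : ℤ, {t ∈ Set.Icc (k:ℝ) (k+1) | η ≤ g t} := by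
      intro t ht
      exact Set.mem_iUnion.2 ⟨⌊t⌋, ⟨⟨Int.floor_le t, le_of_lt (by exact_mod_cast Int.lt_floor_add_one t)⟩, ht⟩⟩
    exact le_antisymm (le_trans (measure_mono hcover)
      (le_of_eq (measure_iUnion_null h))) zero_le
  set u : ℝ := (k : ℝ) with hudef
  set A : Set ℝ := {t ∈ Set.Icc u (u+1) | η ≤ g t} with hAdef
  have hAfin : volume A ≠ ⊤ := by
    apply ne_top_of_le_ne_top (by simp [Real.volume_Icc] : volume (Set.Icc u (u+1)) ≠ ⊤)
    exact measure_mono (fun t ht => ht.1)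
  set δ : ℝ := (volume A).toReal with hδdef
  have hδ : 0 < δ := ENNReal.toReal_pos hk hAfin
  obtain ⟨L, hL, hE⟩ := hap (δ/2) (by positivity) (η/2) (by positivity)
  set c0 : ℝ := (η/2) * (δ/2) with hc0def
  have hc0 : 0 < c0 := by positivity
  -- per-window lower bound
  have key : ∀ τ, Dfun (η/2) (fun t => f (t + τ)) f ≤ δ/2 →
      c0 ≤ ∫ t in Set.Icc (u+τ) (u+τ+1), g t := by
    intro τ hτ
    -- bound on B_f at u
    have hterm : (volume {t ∈ Set.Icc u (u + 1) | η/2 ≤ |f (t + τ) - f t|}).toReal ≤ δ/2 := by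
      refine le_trans ?_ hτ
      apply le_ciSup (f := fun u' => (volume {t ∈ Set.Icc u' (u' + 1) | η/2 ≤ |f (t + τ) - f t|}).toReal)
      refine ⟨1, ?_⟩
      rintro x ⟨u', rfl⟩
      have h1 : volume {t ∈ Set.Icc u' (u' + 1) | η/2 ≤ |f (t + τ) - f t|} ≤ 1 := by
        refine le_trans (measure_mono (fun t ht => ht.1)) ?_
        simp [Real.volume_Icc]
      exact le_trans (ENNReal.toReal_mono (by norm_num) h1) (by norm_num)
    -- transfer to g
    have hshift : ∀ᵐ t : ℝ, f (t + τ) = g (t + τ) := by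
      have : volume ((fun t => t + τ) ⁻¹' {t | f t ≠ g t}) = 0 := by
        rw [measure_preimage_add_right]
        exact ae_iff.mp hfg
      rw [ae_iff]; exact this
    have hBeq : volume {t ∈ Set.Icc u (u + 1) | η/2 ≤ |g (t + τ) - g t|}
        = volume {t ∈ Set.Icc u (u + 1) | η/2 ≤ |f (t + τ) - f t|} := by
      apply measure_congr
      filter_upwards [hfg, hshift] with t h1 h2
      simp only [eq_iff_iff]
      show (t ∈ Set.Icc u (u+1) ∧ η/2 ≤ |g (t+τ) - g t|) ↔
        (t ∈ Set.Icc u (u+1) ∧ η/2 ≤ |f (t+τ) - f t|)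
      rw [h1, h2]
    set B : Set ℝ := {t ∈ Set.Icc u (u + 1) | η/2 ≤ |g (t + τ) - g t|} with hBdef
    set C : Set ℝ := {t ∈ Set.Icc u (u + 1) | η/2 ≤ g (t + τ)} with hCdef
    have hsub : A ⊆ B ∪ C := by
      intro t ⟨ht1, ht2⟩
      by_cases hb : η/2 ≤ |g (t + τ) - g t|
      · exact Or.inl ⟨ht1, hb⟩
      · push_neg at hb
        refine Or.inr ⟨ht1, ?_⟩
        have := abs_lt.1 hb
        have hη2 : η/2 ≤ η := by linarith
        linarith [this.1]
    have hBfin : volume B ≠ ⊤ := by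
      apply ne_top_of_le_ne_top (by simp [Real.volume_Icc] : volume (Set.Icc u (u+1)) ≠ ⊤)
      exact measure_mono (fun t ht => ht.1)
    have hCfin : volume C ≠ ⊤ := by
      apply ne_top_of_le_ne_top (by simp [Real.volume_Icc] : volume (Set.Icc u (u+1)) ≠ ⊤)
      exact measure_mono (fun t ht => ht.1)
    have hABC : δ ≤ (volume B).toReal + (volume C).toReal := by
      have h1 : volume A ≤ volume B + volume C :=
        le_trans (measure_mono hsub) (measure_union_le _ _)
      have := ENNReal.toReal_mono (by
        exact ENNReal.add_ne_top.2 ⟨hBfin, hCfin⟩) h1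
      rwa [ENNReal.toReal_add hBfin hCfin] at this
    have hC : δ/2 ≤ (volume C).toReal := by
      have hB2 : (volume B).toReal ≤ δ/2 := by rw [hBdef, hBeq]; exact hterm
      linarith
    -- S and the integral
    set S : Set ℝ := {t ∈ Set.Icc (u+τ) (u+τ+1) | η/2 ≤ g t} with hSdef
    have hCS : C = (fun t => t + τ) ⁻¹' S := by
      ext t
      simp only [hCdef, hSdef, Set.mem_setOf_eq, Set.mem_preimage, Set.mem_Icc]
      constructor
      · rintro ⟨⟨h1, h2⟩, h3⟩; exact ⟨⟨by linarith, by linarith⟩, h3⟩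
      · rintro ⟨⟨h1, h2⟩, h3⟩; exact ⟨⟨by linarith, by linarith⟩, h3⟩
    have hSvol : δ/2 ≤ (volume S).toReal := by
      have : volume C = volume S := by rw [hCS, measure_preimage_add_right]
      rwa [this] at hC
    have hSmeas : MeasurableSet S :=
      (measurableSet_Icc.inter (hgm measurableSet_Ici)).congr rfl
    have hSfin : volume S ≠ ⊤ := by
      apply ne_top_of_le_ne_top (by simp [Real.volume_Icc] : volume (Set.Icc (u+τ) (u+τ+1)) ≠ ⊤)
      exact measure_mono (fun t ht => ht.1)
    have hgint : IntegrableOn g (Set.Icc (u+τ) (u+τ+1)) volume := by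
      have := hf.integrableOn_isCompact (isCompact_Icc (a := u+τ) (b := u+τ+1))
      exact this.congr_fun_ae (ae_restrict_of_ae hfg)
    have hgintS : IntegrableOn g S volume :=
      hgint.mono_set (fun t ht => ht.1)
    have h1 : (η/2) * (volume S).toReal ≤ ∫ t in S, g t :=
      setIntegral_ge_of_const_le_real hSmeas hSfin (fun t ht => ht.2) hgintS
    have h2 : ∫ t in S, g t ≤ ∫ t in Set.Icc (u+τ) (u+τ+1), g t := by
      apply setIntegral_mono_set hgint (ae_restrict_of_ae hgpos)
      exact HasSubset.Subset.eventuallyLE (fun t ht => ht.1)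
    have h3 : c0 ≤ (η/2) * (volume S).toReal := by
      rw [hc0def]
      exact mul_le_mul_of_nonneg_left hSvol (by positivity)
    linarith
  -- main count
  rw [Metric.tendsto_atTop] at hmean
  obtain ⟨N, hN⟩ := hmean (c0 / (2 * (L + 1))) (by positivity)
  set n : ℕ := max 1 ⌈N⌉₊ with hndef
  have hn1 : 1 ≤ n := le_max_left _ _
  have hnN : (N:ℝ) ≤ n := le_trans (Nat.le_ceil N) (by exact_mod_cast le_max_right 1 ⌈N⌉₊)
  set T : ℝ := n * (L + 1) + 1 with hTdef
  have hnR : (1:ℝ) ≤ n := by exact_mod_cast hn1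
  have hTpos : 0 < T := by nlinarith
  have hTN : N ≤ T := by nlinarith
  -- choose the windows
  have hEx : ∀ k : ℕ, ∃ τ, Dfun (η/2) (fun t => f (t + τ)) f ≤ δ/2 ∧
      (-u + 1 + k * (L+1)) < τ ∧ τ < (-u + 1 + k * (L+1)) + L := by
    intro k
    obtain ⟨τ, hτ1, hτ2, hτ3⟩ := hE (-u + 1 + k * (L+1))
    exact ⟨τ, hτ1, hτ2, hτ3⟩
  choose τ hτE hτlb hτub using hEx
  set v : ℕ → ℝ := fun k => u + τ k with hvdef
  have hvlb : ∀ k : ℕ, 1 + k * (L+1) < v k := fun k => by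
    have := hτlb k; simp only [hvdef]; linarith
  have hvub : ∀ k : ℕ, v k < 1 + k * (L+1) + L := fun k => by
    have := hτub k; simp only [hvdef]; linarith
  set W : ℕ → Set ℝ := fun k => Set.Icc (v k) (v k + 1) with hWdef
  have hvsep : ∀ j k : ℕ, j < k → v j + 1 < v k := by
    intro j k hjk
    have h1 := hvub j
    have h2 := hvlb k
    have : ((j:ℝ) + 1) * (L+1) ≤ k * (L+1) := by
      apply mul_le_mul_of_nonneg_right _ (by linarith)
      exact_mod_cast hjk
    nlinarith
  have hWdisj : (↑(Finset.range n) : Set ℕ).Pairwise (Function.onFun Disjoint W) := by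
    intro j _ k _ hjk
    rcases hjk.lt_or_gt with h | h
    · rw [Function.onFun, Set.disjoint_left]
      rintro t ⟨_, ht2⟩ ⟨ht3, _⟩
      have := hvsep j k h; linarith
    · rw [Function.onFun, Set.disjoint_right]
      rintro t ⟨_, ht2⟩ ⟨ht3, _⟩
      have := hvsep k j h; linarith
  have hWsub : ∀ k ∈ Finset.range n, W k ⊆ Set.Icc 0 T := by
    intro k hk t ⟨ht1, ht2⟩
    have hkn : (k:ℝ) + 1 ≤ n := by exact_mod_cast Finset.mem_range.1 hk
    have h1 := hvlb k
    have h2 := hvub k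
    constructor
    · have : 0 < (k:ℝ) * (L+1) + 1 := by positivity
      linarith
    · have : ((k:ℝ) + 1) * (L+1) ≤ n * (L+1) := by nlinarith
      simp only [hTdef]; nlinarith
  have hgintT : IntegrableOn g (Set.Icc 0 T) volume :=
    (hf.integrableOn_isCompact isCompact_Icc).congr_fun_ae (ae_restrict_of_ae hfg)
  have hWint : ∀ k ∈ Finset.range n, IntegrableOn g (W k) volume :=
    fun k hk => hgintT.mono_set (hWsub k hk)
  have hWmeas : ∀ k ∈ Finset.range n, MeasurableSet (W k) := fun k _ => measurableSet_Icc
  have hsum : (n:ℝ) * c0 ≤ ∫ t in Set.Icc 0 T, g t := by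
    have h1 : ∫ t in ⋃ k ∈ Finset.range n, W k, g t = ∑ k ∈ Finset.range n, ∫ t in W k, g t :=
      integral_biUnion_finset (Finset.range n) hWmeas hWdisj hWint
    have h2 : (n:ℝ) * c0 ≤ ∑ k ∈ Finset.range n, ∫ t in W k, g t := by
      calc (n:ℝ) * c0 = ∑ _k ∈ Finset.range n, c0 := by
            rw [Finset.sum_const, Finset.card_range, nsmul_eq_mul]
        _ ≤ ∑ k ∈ Finset.range n, ∫ t in W k, g t :=
            Finset.sum_le_sum (fun k _ => key (τ k) (hτE k))
    have h3 : ∫ t in ⋃ k ∈ Finset.range n, W k, g t ≤ ∫ t in Set.Icc 0 T, g t := by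
      apply setIntegral_mono_set hgintT (ae_restrict_of_ae hgpos)
      exact HasSubset.Subset.eventuallyLE (Set.iUnion₂_subset hWsub)
    linarith
  have hint : (n:ℝ) * c0 ≤ ∫ x in (0:ℝ)..T, f x := by
    have h1 : ∫ x in (0:ℝ)..T, f x = ∫ x in (0:ℝ)..T, g x :=
      intervalIntegral.integral_congr_ae (by
        filter_upwards [hfg] with t h1 _; exact h1)
    rw [h1, intervalIntegral.integral_of_le (le_of_lt hTpos), ← integral_Icc_eq_integral_Ioc]
    exact hsum
  have hfinal := hN T hTN
  rw [Real.dist_eq, sub_zero] at hfinal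
  have hlow : c0 / (2 * (L + 1)) ≤ (1 / T) * ∫ x in (0:ℝ)..T, f x := by
    have h1 : (1 / T) * ((n:ℝ) * c0) ≤ (1 / T) * ∫ x in (0:ℝ)..T, f x :=
      mul_le_mul_of_nonneg_left hint (by positivity)
    refine le_trans ?_ h1
    have heq : (1 / T) * ((n:ℝ) * c0) = ((n:ℝ) * c0) / T := by ring
    rw [heq, div_le_div_iff₀ (by positivity) hTpos]
    have h2 : (1:ℝ) ≤ (n:ℝ) * (L+1) := by nlinarith
    have h3 : c0 * 1 ≤ c0 * ((n:ℝ) * (L+1)) := mul_le_mul_of_nonneg_left h2 hc0.le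
    have h4 : c0 * T = c0 * ((n:ℝ) * (L+1)) + c0 := by rw [hTdef]; ring
    have h5 : (n:ℝ) * c0 * (2 * (L+1)) = 2 * (c0 * ((n:ℝ) * (L+1))) := by ring
    linarith
  have := le_trans hlow (le_abs_self _)
  linarith
end
end

section
/- If f : ℝ → ℝ is μ-almost periodic, then for every ε, η > 0 the set of integer (ε,η)-almost periods μE{ε,η,f} ∩ ℤ is relatively dense in ℝ. -/
open MeasureTheory Filter Set intervalIntegral

noncomputable section

open scoped ENNReal

/-- Windowed discrepancy measure. -/
def Km (η : ℝ) (f g : ℝ → ℝ) (u : ℝ) : ℝ≥0∞ :=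
  volume {t ∈ Set.Icc u (u + 1) | η ≤ |f t - g t|}

lemma Km_le_one (η : ℝ) (f g : ℝ → ℝ) (u : ℝ) : Km η f g u ≤ 1 := by
  refine le_trans (measure_mono (Set.sep_subset _ _)) ?_
  rw [Real.volume_Icc]; simp

lemma Km_ne_top (η : ℝ) (f g : ℝ → ℝ) (u : ℝ) : Km η f g u ≠ ⊤ :=
  fun h => by simpa [h] using Km_le_one η f g u

lemma dfun_le_iff {ε : ℝ} (hε : 0 ≤ ε) (η : ℝ) (f g : ℝ → ℝ) :
    Dfun η f g ≤ ε ↔ ∀ u, Km η f g u ≤ ENNReal.ofReal ε := by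
  constructor
  · intro H u
    rw [ENNReal.le_ofReal_iff_toReal_le (Km_ne_top η f g u) hε]
    refine le_trans ?_ H
    refine le_ciSup (f := fun v => (volume {t ∈ Set.Icc v (v + 1) | η ≤ |f t - g t|}).toReal) ?_ u
    refine ⟨1, ?_⟩
    rintro x ⟨v, rfl⟩
    have := ENNReal.toReal_mono ENNReal.one_ne_top (Km_le_one η f g v)
    exact this
  · intro H
    refine ciSup_le fun u => ?_
    exact ENNReal.toReal_le_of_le_ofReal hε (H u)

/-- Shifting the predicate inside a windowed set shifts the window. -/
lemma vol_sep_shift (P : ℝ → Prop) (a u : ℝ) :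
    volume {t ∈ Set.Icc u (u + 1) | P (t + a)} =
      volume {t ∈ Set.Icc (u + a) (u + a + 1) | P t} := by
  have hset : {t ∈ Set.Icc u (u + 1) | P (t + a)}
      = (fun t => t + a) ⁻¹' {t ∈ Set.Icc (u + a) (u + a + 1) | P t} := by
    ext t
    simp only [Set.mem_sep_iff, Set.mem_preimage, Set.mem_Icc]
    constructor
    · rintro ⟨⟨h1, h2⟩, h3⟩; exact ⟨⟨by linarith, by linarith⟩, h3⟩
    · rintro ⟨⟨h1, h2⟩, h3⟩; exact ⟨⟨by linarith, by linarith⟩, h3⟩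
  rw [hset, measure_preimage_add_right]


lemma lemB (f : ℝ → ℝ) (hf : Measurable f) (a b : ℝ) {e h : ℝ} (he : 0 < e) (hh : 0 < h) :
    ∃ δ0 : ℝ, 0 < δ0 ∧ δ0 ≤ 1 ∧ ∀ δ : ℝ, |δ| ≤ δ0 →
      volume {s ∈ Set.Icc a b | h ≤ |f (s + δ) - f s|} ≤ ENNReal.ofReal e := by
  set J : Set ℝ := Set.Icc (a - 1) (b + 2) with hJ
  set S : ℕ → Set ℝ := fun M => {s ∈ J | (M : ℝ) ≤ |f s|} with hS
  -- choose M with small bad set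
  have hSmeas : ∀ M, MeasurableSet (S M) := by
    intro M
    exact measurableSet_Icc.inter (measurableSet_le measurable_const hf.abs)
  have hSanti : Antitone S := by
    intro M M' hMM' s hs
    exact ⟨hs.1, le_trans (by exact_mod_cast Nat.cast_le.2 hMM') hs.2⟩
  have hSempty : (⋂ M, S M) = ∅ := by
    ext s
    simp only [Set.mem_iInter, Set.mem_empty_iff_false, iff_false]
    intro hcon
    obtain ⟨M, hM⟩ := exists_nat_gt |f s|
    exact absurd (hcon M).2 (not_le.2 hM)
  have hSfin : volume (S 0) ≠ ⊤ := by
    refine ne_top_of_le_ne_top ?_ (measure_mono (Set.sep_subset _ _))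
    rw [Real.volume_Icc]; exact ENNReal.ofReal_ne_top
  have htend : Tendsto (volume ∘ S) atTop (nhds 0) := by
    have := tendsto_measure_iInter_atTop (μ := volume) (s := S)
      (fun M => (hSmeas M).nullMeasurableSet) hSanti ⟨0, hSfin⟩
    rwa [hSempty, measure_empty] at this
  have hM5 : ∀ᶠ M in atTop, (volume ∘ S) M < ENNReal.ofReal (e / 5) :=
    htend.eventually_lt_const (by positivity)
  obtain ⟨M, hM⟩ := hM5.exists
  have hMbad : volume (S M) ≤ ENNReal.ofReal (e / 5) := le_of_lt hM
  -- truncation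
  set g : ℝ → ℝ := J.indicator (fun s => max (-(M : ℝ)) (min (M : ℝ) (f s))) with hg
  have gmeas : Measurable g :=
    (measurable_const.max (measurable_const.min hf)).indicator measurableSet_Icc
  have hgf : ∀ s, s ∈ J → ¬((M : ℝ) ≤ |f s|) → g s = f s := by
    intro s hsJ hsM
    push_neg at hsM
    rw [hg, Set.indicator_of_mem hsJ]
    rw [min_eq_right (le_of_lt (lt_of_le_of_lt (le_abs_self _) hsM))]
    rw [max_eq_right (le_of_lt (neg_lt_of_abs_lt hsM))]
  have hgbound : ∀ s, ‖g s‖ ≤ J.indicator (fun _ => (M : ℝ)) s := by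
    intro s
    by_cases hsJ : s ∈ J
    · rw [hg, Set.indicator_of_mem hsJ, Set.indicator_of_mem hsJ]
      rw [Real.norm_eq_abs, abs_le]
      constructor
      · exact le_max_left _ _
      · exact max_le (by simp [Nat.cast_nonneg]) (min_le_left _ _)
    · rw [hg, Set.indicator_of_notMem hsJ, Set.indicator_of_notMem hsJ]
      simp
  have hgint : Integrable g := by
    refine Integrable.mono' ?_ gmeas.aestronglyMeasurable (Filter.Eventually.of_forall hgbound)
    rw [integrable_indicator_iff measurableSet_Icc]
    refine integrableOn_const (ne_of_lt ?_)
    rw [Real.volume_Icc]; exact ENNReal.ofReal_lt_top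
  -- continuous approximation
  obtain ⟨φ, φsupp, φle, φcont, φint⟩ :=
    hgint.exists_hasCompactSupport_lintegral_sub_le
      (ε := ENNReal.ofReal (e * h / 25)) (ENNReal.ofReal_pos.2 (by positivity)).ne'
  -- Chebyshev
  have cheb : volume {s : ℝ | h / 5 ≤ |g s - φ s|} ≤ ENNReal.ofReal (e / 5) := by
    have hmeas : AEMeasurable (fun s => (‖g s - φ s‖₊ : ℝ≥0∞)) volume :=
      ((gmeas.sub φcont.measurable).nnnorm.coe_nnreal_ennreal).aemeasurable
    have hcheb := meas_ge_le_lintegral_div hmeas (ε := ENNReal.ofReal (h / 5))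
      (ENNReal.ofReal_pos.2 (by positivity)).ne' ENNReal.ofReal_ne_top
    have hsets : {s : ℝ | h / 5 ≤ |g s - φ s|}
        = {x : ℝ | ENNReal.ofReal (h / 5) ≤ (‖g x - φ x‖₊ : ℝ≥0∞)} := by
      ext s
      rw [Set.mem_setOf_eq, Set.mem_setOf_eq, ← enorm_eq_nnnorm, Real.enorm_eq_ofReal_abs,
        ENNReal.ofReal_le_ofReal_iff (abs_nonneg _)]
    rw [hsets]
    refine le_trans hcheb ?_
    refine le_trans (ENNReal.div_le_div_right φle _) ?_
    rw [← ENNReal.ofReal_div_of_pos (by positivity)]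
    refine ENNReal.ofReal_le_ofReal (le_of_eq ?_)
    field_simp
    ring
  -- uniform continuity of φ
  have φuc : UniformContinuous φ := φsupp.uniformContinuous_of_continuous φcont
  obtain ⟨δ1, hδ1, hδ1c⟩ := Metric.uniformContinuous_iff.mp φuc (h / 5) (by positivity)
  refine ⟨min 1 (δ1 / 2), lt_min one_pos (by positivity), min_le_left _ _, ?_⟩
  intro δ hδ
  have hδ1' : |δ| < δ1 := lt_of_le_of_lt (le_trans hδ (min_le_right _ _)) (by linarith)
  have hδle1 : |δ| ≤ 1 := le_trans hδ (min_le_left _ _)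
  -- the subset decomposition
  have hsub : {s ∈ Set.Icc a b | h ≤ |f (s + δ) - f s|} ⊆
      ((fun s => s + δ) ⁻¹' (S M)) ∪ ((fun s => s + δ) ⁻¹' {s : ℝ | h / 5 ≤ |g s - φ s|})
        ∪ {s : ℝ | h / 5 ≤ |g s - φ s|} ∪ S M := by
    rintro s ⟨hsab, hsd⟩
    by_contra hc
    simp only [Set.mem_union, Set.mem_preimage, Set.mem_setOf_eq, not_or] at hc
    obtain ⟨⟨⟨hc1, hc2⟩, hc4⟩, hc5⟩ := hc
    obtain ⟨hsa, hsb⟩ := hsab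
    have hsJ : s ∈ J := ⟨by linarith, by linarith⟩
    have hsdJ : s + δ ∈ J := by
      have h1 := abs_le.1 hδle1
      exact ⟨by linarith [h1.1], by linarith [h1.2]⟩
    have e1 : g (s + δ) = f (s + δ) := by
      refine hgf _ hsdJ ?_
      intro hcon
      exact hc1 ⟨hsdJ, hcon⟩
    have e5 : g s = f s := by
      refine hgf _ hsJ ?_
      intro hcon
      exact hc5 ⟨hsJ, hcon⟩
    have e3 : |φ (s + δ) - φ s| < h / 5 := by
      have := hδ1c (a := s + δ) (b := s) (by simpa [Real.dist_eq] using hδ1')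
      simpa [Real.dist_eq] using this
    push_neg at hc2 hc4
    have : |f (s + δ) - f s| < h := by
      rw [← e1, ← e5]
      calc |g (s + δ) - g s| ≤ |g (s + δ) - φ (s + δ)| + |φ (s + δ) - φ s| + |φ s - g s| := by
            have t1 := abs_sub_le (g (s + δ)) (φ (s + δ)) (g s)
            have t2 := abs_sub_le (φ (s + δ)) (φ s) (g s)
            linarith
        _ < h / 5 + h / 5 + h / 5 := by
            have hc4' : |φ s - g s| < h / 5 := by rwa [abs_sub_comm]
            exact add_lt_add (add_lt_add hc2 e3) hc4'
        _ < h := by linarith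
    exact absurd hsd (not_le.2 this)
  refine le_trans (measure_mono hsub) ?_
  refine le_trans (measure_union_le _ _) ?_
  refine le_trans (add_le_add (le_trans (measure_union_le _ _)
    (add_le_add (measure_union_le _ _) (le_refl _))) (le_refl _)) ?_
  have hA1 : volume ((fun s => s + δ) ⁻¹' (S M)) ≤ ENNReal.ofReal (e / 5) := by
    rw [measure_preimage_add_right]; exact hMbad
  have hA2 : volume ((fun s => s + δ) ⁻¹' {s : ℝ | h / 5 ≤ |g s - φ s|})
      ≤ ENNReal.ofReal (e / 5) := by
    rw [measure_preimage_add_right]; exact cheb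
  calc volume ((fun s => s + δ) ⁻¹' (S M))
        + volume ((fun s => s + δ) ⁻¹' {s : ℝ | h / 5 ≤ |g s - φ s|})
        + volume {s : ℝ | h / 5 ≤ |g s - φ s|} + volume (S M)
      ≤ ENNReal.ofReal (e / 5) + ENNReal.ofReal (e / 5) + ENNReal.ofReal (e / 5)
        + ENNReal.ofReal (e / 5) :=
        add_le_add (add_le_add (add_le_add hA1 hA2) cheb) hMbad
    _ = ENNReal.ofReal (e / 5 + e / 5 + e / 5 + e / 5) := by
        rw [← ENNReal.ofReal_add (by positivity) (by positivity),
          ← ENNReal.ofReal_add (by positivity) (by positivity),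
          ← ENNReal.ofReal_add (by positivity) (by positivity)]
    _ ≤ ENNReal.ofReal e := ENNReal.ofReal_le_ofReal (by linarith)

lemma lemA (f : ℝ → ℝ) (hf : Measurable f) (hap : MuAP f) {e h : ℝ} (he : 0 < e) (hh : 0 < h) :
    ∃ δ0 : ℝ, 0 < δ0 ∧ ∀ δ : ℝ, |δ| ≤ δ0 → ∀ u : ℝ,
      Km h (fun t => f (t + δ)) f u ≤ ENNReal.ofReal e := by
  obtain ⟨l, hl, hlp⟩ := hap (e / 3) (by positivity) (h / 3) (by positivity)
  obtain ⟨δ1, hδ1, _, hB⟩ := lemB f hf 0 (l + 1)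
    (show (0:ℝ) < e / 3 by positivity) (show (0:ℝ) < h / 3 by positivity)
  refine ⟨δ1, hδ1, ?_⟩
  intro δ hδ u
  obtain ⟨τ, hτE, hτ1, hτ2⟩ := hlp (-u)
  rw [Set.mem_setOf_eq] at hτE
  have hKτ : ∀ v, Km (h / 3) (fun t => f (t + τ)) f v ≤ ENNReal.ofReal (e / 3) :=
    (dfun_le_iff (by positivity) _ _ _).1 hτE
  have hsub : {t ∈ Set.Icc u (u + 1) | h ≤ |f (t + δ) - f t|} ⊆
      {t ∈ Set.Icc u (u + 1) | h / 3 ≤ |f (t + δ) - f (t + δ + τ)|} ∪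
      ({t ∈ Set.Icc u (u + 1) | h / 3 ≤ |f (t + τ + δ) - f (t + τ)|} ∪
       {t ∈ Set.Icc u (u + 1) | h / 3 ≤ |f (t + τ) - f t|}) := by
    rintro t ⟨htI, ht⟩
    by_contra hc
    simp only [Set.mem_union, Set.mem_sep_iff, not_or, not_and] at hc
    obtain ⟨hc1, hc2, hc3⟩ := hc
    have h1 := not_le.1 (hc1 htI)
    have h2 := not_le.1 (hc2 htI)
    have h3 := not_le.1 (hc3 htI)
    have hre : t + δ + τ = t + τ + δ := by ring
    rw [hre] at h1
    have := abs_sub_le (f (t + δ)) (f (t + τ + δ)) (f t)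
    have := abs_sub_le (f (t + τ + δ)) (f (t + τ)) (f t)
    linarith
  refine le_trans (measure_mono hsub) (le_trans (measure_union_le _ _) ?_)
  refine le_trans (add_le_add (le_refl _) (measure_union_le _ _)) ?_
  have hS1 : volume {t ∈ Set.Icc u (u + 1) | h / 3 ≤ |f (t + δ) - f (t + δ + τ)|}
      ≤ ENNReal.ofReal (e / 3) := by
    rw [vol_sep_shift (fun t => h / 3 ≤ |f t - f (t + τ)|) δ u]
    have : {t ∈ Set.Icc (u + δ) (u + δ + 1) | h / 3 ≤ |f t - f (t + τ)|}
        = {t ∈ Set.Icc (u + δ) (u + δ + 1) | h / 3 ≤ |f (t + τ) - f t|} := by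
      ext t; simp [abs_sub_comm]
    rw [this]
    exact hKτ (u + δ)
  have hS2 : volume {t ∈ Set.Icc u (u + 1) | h / 3 ≤ |f (t + τ + δ) - f (t + τ)|}
      ≤ ENNReal.ofReal (e / 3) := by
    rw [vol_sep_shift (fun t => h / 3 ≤ |f (t + δ) - f t|) τ u]
    refine le_trans (measure_mono ?_) (hB δ hδ)
    rintro t ⟨htI, ht⟩
    refine ⟨?_, ht⟩
    rw [Set.mem_Icc] at htI ⊢
    constructor <;> [linarith [htI.1]; linarith [htI.2]]
  have hS3 : volume {t ∈ Set.Icc u (u + 1) | h / 3 ≤ |f (t + τ) - f t|}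
      ≤ ENNReal.ofReal (e / 3) := hKτ u
  calc volume {t ∈ Set.Icc u (u + 1) | h / 3 ≤ |f (t + δ) - f (t + δ + τ)|}
        + (volume {t ∈ Set.Icc u (u + 1) | h / 3 ≤ |f (t + τ + δ) - f (t + τ)|}
          + volume {t ∈ Set.Icc u (u + 1) | h / 3 ≤ |f (t + τ) - f t|})
      ≤ ENNReal.ofReal (e / 3) + (ENNReal.ofReal (e / 3) + ENNReal.ofReal (e / 3)) :=
        add_le_add hS1 (add_le_add hS2 hS3)
    _ = ENNReal.ofReal (e / 3 + (e / 3 + e / 3)) := by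
        rw [ENNReal.ofReal_add (by positivity) (by positivity),
          ENNReal.ofReal_add (by positivity) (by positivity)]
    _ ≤ ENNReal.ofReal e := ENNReal.ofReal_le_ofReal (by linarith)

theorem stmt11 (f : ℝ → ℝ) (hf : Measurable f) (hap : MuAP f) :
    ∀ ε > 0, ∀ η > 0,
      RelDense ({τ | Dfun η (fun t => f (t + τ)) f ≤ ε} ∩
        Set.range (fun k : ℤ => (k : ℝ))) := by
  intro ε hε η hη
  obtain ⟨l, hl, hlp⟩ := hap (ε / 5) (by positivity) (η / 5) (by positivity)
  obtain ⟨δ0, hδ0, hA⟩ := lemA f hf hap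
    (show (0:ℝ) < ε / 5 by positivity) (show (0:ℝ) < η / 5 by positivity)
  set N : ℕ := ⌈1 / δ0⌉₊ + 1 with hNdef
  have hN : (0:ℝ) < (N:ℝ) := by positivity
  have hNδ : 1 / (N:ℝ) ≤ δ0 := by
    rw [div_le_iff₀ hN]
    have h1 : 1 / δ0 ≤ ((⌈1 / δ0⌉₊ : ℕ) : ℝ) := Nat.le_ceil _
    have h2 : 1 / δ0 ≤ (N:ℝ) := by
      refine h1.trans ?_
      rw [hNdef]; push_cast; linarith
    calc (1:ℝ) = δ0 * (1 / δ0) := by field_simp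
      _ ≤ δ0 * (N:ℝ) := mul_le_mul_of_nonneg_left h2 hδ0.le
  classical
  set P : ℕ → Prop := fun k => ∃ ρ : ℝ,
    (Dfun (η / 5) (fun t => f (t + ρ)) f ≤ ε / 5) ∧ ⌊(N:ℝ) * Int.fract ρ⌋ = (k:ℤ) with hPdef
  set R : ℕ → ℝ := fun k => if hk : P k then hk.choose else 0 with hRdef
  have hR : ∀ k, P k → (Dfun (η / 5) (fun t => f (t + R k)) f ≤ ε / 5) ∧
      ⌊(N:ℝ) * Int.fract (R k)⌋ = (k:ℤ) := by
    intro k hk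
    simp only [hRdef, dif_pos hk]
    exact hk.choose_spec
  set C : ℕ := (Finset.range N).sup (fun k => ⌈|R k|⌉₊) with hCdef
  have hC : ∀ k, k < N → |R k| ≤ (C:ℝ) := by
    intro k hk
    refine le_trans (Nat.le_ceil _) ?_
    exact_mod_cast Nat.cast_le.2 (Finset.le_sup (f := fun k => ⌈|R k|⌉₊)
      (Finset.mem_range.2 hk))
  refine ⟨2 * (C:ℝ) + l + 3, by positivity, ?_⟩
  intro x
  obtain ⟨τ, hτE, hτ1, hτ2⟩ := hlp (x + C + 2)
  rw [Set.mem_setOf_eq] at hτE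
  have hfr0 : (0:ℝ) ≤ (N:ℝ) * Int.fract τ := mul_nonneg hN.le (Int.fract_nonneg τ)
  have hfrlt : (N:ℝ) * Int.fract τ < (N:ℝ) := by
    nlinarith [Int.fract_lt_one τ]
  set k : ℕ := (⌊(N:ℝ) * Int.fract τ⌋).toNat with hkdef
  have hkfloor : ⌊(N:ℝ) * Int.fract τ⌋ = (k:ℤ) :=
    (Int.toNat_of_nonneg (Int.floor_nonneg.2 hfr0)).symm
  have hkN : k < N := by
    have h3 : ⌊(N:ℝ) * Int.fract τ⌋ < (N:ℤ) := by
      refine Int.floor_lt.2 ?_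
      exact_mod_cast hfrlt
    rw [hkfloor] at h3
    exact_mod_cast h3
  have hPk : P k := ⟨τ, hτE, hkfloor⟩
  obtain ⟨hρE, hρk⟩ := hR k hPk
  set ρ := R k with hρdef
  set δ : ℝ := Int.fract τ - Int.fract ρ with hδdef
  have hδs : |δ| ≤ δ0 := by
    have hbτ : (k:ℝ) ≤ (N:ℝ) * Int.fract τ ∧ (N:ℝ) * Int.fract τ < (k:ℝ) + 1 := by
      constructor
      · have := Int.floor_le ((N:ℝ) * Int.fract τ)
        rw [hkfloor] at this; exact_mod_cast this
      · have := Int.lt_floor_add_one ((N:ℝ) * Int.fract τ)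
        rw [hkfloor] at this; exact_mod_cast this
    have hbρ : (k:ℝ) ≤ (N:ℝ) * Int.fract ρ ∧ (N:ℝ) * Int.fract ρ < (k:ℝ) + 1 := by
      constructor
      · have := Int.floor_le ((N:ℝ) * Int.fract ρ)
        rw [hρk] at this; exact_mod_cast this
      · have := Int.lt_floor_add_one ((N:ℝ) * Int.fract ρ)
        rw [hρk] at this; exact_mod_cast this
    have hNδ' : |(N:ℝ) * δ| < 1 := by
      rw [abs_lt]
      constructor
      · rw [hδdef]; nlinarith [hbτ.1, hbρ.2]
      · rw [hδdef]; nlinarith [hbτ.2, hbρ.1]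
    have : |δ| < 1 / (N:ℝ) := by
      rw [lt_div_iff₀ hN, ← abs_of_pos hN, ← abs_mul]
      rwa [mul_comm]
    exact this.le.trans hNδ
  have hδ1 : |δ| < 1 := by
    rw [abs_lt, hδdef]
    constructor
    · nlinarith [Int.fract_lt_one τ, Int.fract_nonneg ρ, Int.fract_nonneg τ, Int.fract_lt_one ρ]
    · nlinarith [Int.fract_lt_one τ, Int.fract_nonneg ρ]
  set n : ℤ := ⌊τ⌋ - ⌊ρ⌋ with hndef
  have hnval : (n:ℝ) = τ - ρ - δ := by
    have e1 : τ - Int.fract τ = (⌊τ⌋ : ℝ) := Int.self_sub_fract τ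
    have e2 : ρ - Int.fract ρ = (⌊ρ⌋ : ℝ) := Int.self_sub_fract ρ
    rw [hndef]; push_cast
    rw [← e1, ← e2, hδdef]; ring
  have hρC : |ρ| ≤ (C:ℝ) := hC k hkN
  have habs := abs_le.1 hρC
  have habsδ := abs_lt.1 hδ1
  refine ⟨(n:ℝ), ⟨?_, ⟨n, rfl⟩⟩, ?_, ?_⟩
  · -- Dfun η (fun t => f (t + n)) f ≤ ε
    rw [Set.mem_setOf_eq]
    rw [dfun_le_iff hε.le]
    intro u
    have hKρ : ∀ v, Km (η / 5) (fun t => f (t + ρ)) f v ≤ ENNReal.ofReal (ε / 5) :=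
      (dfun_le_iff (by positivity) _ _ _).1 hρE
    have hKτ : ∀ v, Km (η / 5) (fun t => f (t + τ)) f v ≤ ENNReal.ofReal (ε / 5) :=
      (dfun_le_iff (by positivity) _ _ _).1 hτE
    have hsub : {t ∈ Set.Icc u (u + 1) | η ≤ |f (t + (n:ℝ)) - f t|} ⊆
        {t ∈ Set.Icc u (u + 1) | η / 5 ≤ |f (t + (n:ℝ)) - f (t + (n:ℝ) + ρ)|} ∪
        ({t ∈ Set.Icc u (u + 1) | η / 5 ≤ |f (t + ((n:ℝ) + ρ) + δ) - f (t + ((n:ℝ) + ρ))|} ∪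
         {t ∈ Set.Icc u (u + 1) | η / 5 ≤ |f (t + τ) - f t|}) := by
      rintro t ⟨htI, ht⟩
      by_contra hc
      simp only [Set.mem_union, Set.mem_sep_iff, not_or, not_and] at hc
      obtain ⟨hc1, hc2, hc3⟩ := hc
      have h1 := not_le.1 (hc1 htI)
      have h2 := not_le.1 (hc2 htI)
      have h3 := not_le.1 (hc3 htI)
      have hre1 : t + (n:ℝ) + ρ = t + ((n:ℝ) + ρ) := by ring
      have hre2 : t + ((n:ℝ) + ρ) + δ = t + τ := by rw [hnval]; ring
      rw [hre1] at h1
      rw [hre2] at h2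
      have t1 := abs_sub_le (f (t + (n:ℝ))) (f (t + ((n:ℝ) + ρ))) (f t)
      have t2 := abs_sub_le (f (t + ((n:ℝ) + ρ))) (f (t + τ)) (f t)
      have : |f (t + (n:ℝ)) - f t| < η := by
        rw [abs_sub_comm (f (t + τ)) (f (t + ((n:ℝ) + ρ)))] at h2
        linarith
      exact absurd ht (not_le.2 this)
    show volume {t ∈ Set.Icc u (u + 1) | η ≤ |f (t + (n:ℝ)) - f t|} ≤ ENNReal.ofReal ε
    refine le_trans (measure_mono hsub) (le_trans (measure_union_le _ _) ?_)
    refine le_trans (add_le_add (le_refl _) (measure_union_le _ _)) ?_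
    have hM1 : volume {t ∈ Set.Icc u (u + 1) | η / 5 ≤ |f (t + (n:ℝ)) - f (t + (n:ℝ) + ρ)|}
        ≤ ENNReal.ofReal (ε / 5) := by
      rw [vol_sep_shift (fun t => η / 5 ≤ |f t - f (t + ρ)|) (n:ℝ) u]
      have : {t ∈ Set.Icc (u + (n:ℝ)) (u + (n:ℝ) + 1) | η / 5 ≤ |f t - f (t + ρ)|}
          = {t ∈ Set.Icc (u + (n:ℝ)) (u + (n:ℝ) + 1) | η / 5 ≤ |f (t + ρ) - f t|} := by
        ext t; simp [abs_sub_comm]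
      rw [this]
      exact hKρ (u + (n:ℝ))
    have hM2 : volume {t ∈ Set.Icc u (u + 1) |
          η / 5 ≤ |f (t + ((n:ℝ) + ρ) + δ) - f (t + ((n:ℝ) + ρ))|}
        ≤ ENNReal.ofReal (ε / 5) := by
      rw [vol_sep_shift (fun t => η / 5 ≤ |f (t + δ) - f t|) ((n:ℝ) + ρ) u]
      exact hA δ hδs (u + ((n:ℝ) + ρ))
    have hM3 : volume {t ∈ Set.Icc u (u + 1) | η / 5 ≤ |f (t + τ) - f t|}
        ≤ ENNReal.ofReal (ε / 5) := hKτ u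
    calc volume {t ∈ Set.Icc u (u + 1) | η / 5 ≤ |f (t + (n:ℝ)) - f (t + (n:ℝ) + ρ)|}
          + (volume {t ∈ Set.Icc u (u + 1) |
              η / 5 ≤ |f (t + ((n:ℝ) + ρ) + δ) - f (t + ((n:ℝ) + ρ))|}
            + volume {t ∈ Set.Icc u (u + 1) | η / 5 ≤ |f (t + τ) - f t|})
        ≤ ENNReal.ofReal (ε / 5) + (ENNReal.ofReal (ε / 5) + ENNReal.ofReal (ε / 5)) :=
          add_le_add hM1 (add_le_add hM2 hM3)
      _ = ENNReal.ofReal (ε / 5 + (ε / 5 + ε / 5)) := by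
          rw [ENNReal.ofReal_add (by positivity) (by positivity),
            ENNReal.ofReal_add (by positivity) (by positivity)]
      _ ≤ ENNReal.ofReal ε := ENNReal.ofReal_le_ofReal (by linarith)
  · -- x < n
    rw [hnval]; linarith
  · -- n < x + L
    rw [hnval]; linarith
end
end

section
/- Let f : ℝ → ℝ be locally integrable and μ-almost periodic with f(t) − σ ≥ 0 a.e., σ ≥ 0. The firing map of the LIF model driven by f is well-defined for every t ∈ ℝ if and only if there exists a measurable set A ⊆ ℝ of positive Lebesgue measure with f(t) − σ > 0 for a.e. t ∈ A. -/
open MeasureTheory Filter Set intervalIntegral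

noncomputable section

/-- Absolute continuity of the integral, in the form needed below. -/
lemma abscont {h : ℝ → ℝ} {s : Set ℝ} (_hs : MeasurableSet s) (hi : IntegrableOn h s volume)
    {c : ℝ} (hc : 0 < c) :
    ∃ ε > 0, ∀ B : Set ℝ, B ⊆ s → MeasurableSet B → volume B ≤ ENNReal.ofReal ε →
      ∫ x in B, h x ≤ c := by
  have hfin : ∫⁻ x, ENNReal.ofReal ‖h x‖ ∂(volume.restrict s) ≠ ⊤ := by
    have h2 := hi.2
    rw [hasFiniteIntegral_iff_norm] at h2
    exact h2.ne
  obtain ⟨δ, hδ0, hδ⟩ := exists_pos_setLIntegral_lt_of_measure_lt hfin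
    (ε := ENNReal.ofReal c) (by simp [hc])
  have hmne : min δ 1 ≠ 0 := (lt_min hδ0 zero_lt_one).ne'
  have hmnt : min δ 1 ≠ ⊤ := ne_top_of_le_ne_top ENNReal.one_ne_top (min_le_right _ _)
  have hm0 : 0 < (min δ 1).toReal := ENNReal.toReal_pos hmne hmnt
  refine ⟨(min δ 1).toReal / 2, by linarith, ?_⟩
  intro B hBs hBm hBv
  have hεδ : ENNReal.ofReal ((min δ 1).toReal / 2) < δ := by
    calc ENNReal.ofReal ((min δ 1).toReal / 2) < ENNReal.ofReal ((min δ 1).toReal) := by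
          rw [ENNReal.ofReal_lt_ofReal_iff hm0]; linarith
      _ = min δ 1 := ENNReal.ofReal_toReal hmnt
      _ ≤ δ := min_le_left _ _
  have hBδ : (volume.restrict s) B < δ := by
    rw [Measure.restrict_apply hBm, inter_eq_self_of_subset_left hBs]
    exact lt_of_le_of_lt hBv hεδ
  have key := hδ B hBδ
  have hre : volume.restrict B = (volume.restrict s).restrict B := by
    rw [Measure.restrict_restrict hBm, inter_eq_self_of_subset_left hBs]
  calc ∫ x in B, h x ≤ ‖∫ x in B, h x‖ := le_abs_self _
    _ ≤ (∫⁻ x, ENNReal.ofReal ‖h x‖ ∂(volume.restrict B)).toReal :=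
        norm_integral_le_lintegral_norm _
    _ ≤ c := by
        rw [hre]
        have hk : (∫⁻ x, ENNReal.ofReal ‖h x‖ ∂((volume.restrict s).restrict B)) < ENNReal.ofReal c := key
        calc (∫⁻ x, ENNReal.ofReal ‖h x‖ ∂((volume.restrict s).restrict B)).toReal
            ≤ (ENNReal.ofReal c).toReal :=
              (ENNReal.toReal_le_toReal (ne_top_of_lt hk) ENNReal.ofReal_ne_top).2 hk.le
          _ = c := ENNReal.toReal_ofReal hc.le

theorem stmt13 (σ : ℝ) (hσ : 0 ≤ σ) (f : ℝ → ℝ) (hf : LocallyIntegrable f volume)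
    (hap : MuAP f) (hpos : ∀ᵐ t, σ ≤ f t) :
    (∀ t : ℝ, (FiringSet σ f t).Nonempty) ↔
      ∃ A : Set ℝ, MeasurableSet A ∧ 0 < volume A ∧
        ∀ᵐ t ∂(volume.restrict A), σ < f t := by
  have hInt : ∀ a b : ℝ, IntervalIntegrable (fun u => f u - σ) volume a b := fun a b =>
    ((hf.integrableOn_isCompact isCompact_uIcc).intervalIntegrable).sub
      intervalIntegrable_const
  have hIntExp : ∀ a b : ℝ,
      IntervalIntegrable (fun u => (f u - σ) * Real.exp (σ * u)) volume a b := fun a b =>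
    (hInt a b).mul_continuousOn
      ((Real.continuous_exp.comp (continuous_const.mul continuous_id)).continuousOn)
  constructor
  · intro h
    have hAS := hf.aestronglyMeasurable
    set g := hAS.mk f with hg
    have hfg : f =ᵐ[volume] g := hAS.ae_eq_mk
    have hgm : Measurable g := hAS.stronglyMeasurable_mk.measurable
    refine ⟨{t | σ < g t}, measurableSet_lt measurable_const hgm, ?_, ?_⟩
    · by_contra h0
      have h0' : volume {t | σ < g t} = 0 := nonpos_iff_eq_zero.1 (not_lt.1 h0)
      have hgle : ∀ᵐ t, ¬ σ < g t := by
        rw [ae_iff]; simpa using h0'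
      have hfeq : ∀ᵐ u : ℝ, f u = σ := by
        filter_upwards [hpos, hfg, hgle] with u h1 h2 h3
        exact le_antisymm (h2 ▸ not_lt.1 h3) h1
      obtain ⟨t', ht1, ht2⟩ := h 0
      have hzero : (∫ u in (0:ℝ)..t', (f u - σ) * Real.exp (σ * u)) = 0 := by
        rw [intervalIntegral.integral_congr_ae (g := fun _ => (0:ℝ))
          (hfeq.mono fun x hx _ => by simp [hx])]
        simp
      rw [hzero] at ht2
      exact absurd ht2 (not_le.2 (Real.exp_pos _))
    · filter_upwards [ae_restrict_mem (measurableSet_lt measurable_const hgm),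
        ae_restrict_of_ae hfg] with x hx hx2
      rw [hx2]; exact hx
  · rintro ⟨A, hAm, hA0, hAf⟩ t
    -- Step A: find an integer interval where A has positive measure
    obtain ⟨n, hn⟩ : ∃ n : ℤ, 0 < volume (A ∩ Icc (n : ℝ) ((n : ℝ) + 1)) := by
      by_contra hcon
      push_neg at hcon
      have hsub : A ⊆ ⋃ k : ℤ, A ∩ Icc (k : ℝ) ((k : ℝ) + 1) := fun x hx =>
        mem_iUnion.2 ⟨⌊x⌋, hx, Int.floor_le x, (Int.lt_floor_add_one x).le⟩
      have h0 : volume (⋃ k : ℤ, A ∩ Icc (k : ℝ) ((k : ℝ) + 1)) = 0 :=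
        measure_iUnion_null fun k => nonpos_iff_eq_zero.1 (hcon k)
      exact hA0.ne' (nonpos_iff_eq_zero.1 (h0 ▸ measure_mono hsub))
    set s : Set ℝ := A ∩ Icc (n : ℝ) ((n : ℝ) + 1) with hsdef
    have hsm : MeasurableSet s := hAm.inter measurableSet_Icc
    have hssub : s ⊆ Icc (n : ℝ) ((n : ℝ) + 1) := inter_subset_right
    have hIccInt : IntegrableOn (fun u => f u - σ) (Icc (n : ℝ) ((n : ℝ) + 1)) volume :=
      (hf.integrableOn_isCompact isCompact_Icc).sub
        (integrableOn_const measure_Icc_lt_top.ne)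
    have hsInt : IntegrableOn (fun u => f u - σ) s volume := hIccInt.mono_set hssub
    have hspos : ∀ᵐ x ∂volume.restrict s, 0 < f x - σ := by
      have h1 : ∀ᵐ x ∂volume.restrict s, σ < f x :=
        hAf.filter_mono (ae_mono (Measure.restrict_mono inter_subset_left le_rfl))
      exact h1.mono fun x hx => sub_pos.2 hx
    have hcpos : 0 < ∫ x in s, (f x - σ) := by
      rw [setIntegral_pos_iff_support_of_nonneg_ae (hspos.mono fun x hx => hx.le) hsInt]
      have hss : ∀ᵐ x ∂volume.restrict s, x ∈ Function.support fun x => f x - σ :=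
        hspos.mono fun x hx => ne_of_gt hx
      have hns : volume (s \ Function.support fun x => f x - σ) = 0 := by
        have h1 := ae_iff.mp hss
        rw [Measure.restrict_apply' hsm] at h1
        have hset : s \ (Function.support fun x => f x - σ) =
            {a | a ∉ Function.support fun x => f x - σ} ∩ s := by
          ext x
          constructor
          · rintro ⟨ha, hb⟩; exact ⟨hb, ha⟩
          · rintro ⟨ha, hb⟩; exact ⟨hb, ha⟩
        rw [hset]
        exact h1
      calc (0:ENNReal) < volume s := hn
        _ ≤ volume ((Function.support fun x => f x - σ) ∩ s ∪
              (s \ Function.support fun x => f x - σ)) := by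
            apply measure_mono
            intro x hx
            by_cases hxs : x ∈ Function.support fun x => f x - σ
            · exact Or.inl ⟨hxs, hx⟩
            · exact Or.inr ⟨hx, hxs⟩
        _ ≤ volume ((Function.support fun x => f x - σ) ∩ s) +
              volume (s \ Function.support fun x => f x - σ) := measure_union_le _ _
        _ = volume ((Function.support fun x => f x - σ) ∩ s) := by rw [hns, add_zero]
    set c : ℝ := ∫ x in s, (f x - σ) with hcdef
    have hnonnegIcc : 0 ≤ᵐ[volume.restrict (Icc (n : ℝ) ((n : ℝ) + 1))] fun u => f u - σ :=
      ae_restrict_of_ae (hpos.mono fun x hx => sub_nonneg.2 hx)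
    have hcIcc : c ≤ ∫ x in Icc (n : ℝ) ((n : ℝ) + 1), (f x - σ) :=
      setIntegral_mono_set hIccInt hnonnegIcc (HasSubset.Subset.eventuallyLE hssub)
    -- Step C: absolute continuity
    obtain ⟨ε, hε, hεP⟩ := abscont measurableSet_Icc hIccInt (show 0 < c / 4 by linarith)
    -- Step D: almost periodicity
    obtain ⟨l, hl, hT⟩ := hap ε hε (c / 4) (by linarith)
    -- Step E: key estimate for good translates
    have hkey : ∀ τ : ℝ, Dfun (c / 4) (fun t => f (t + τ)) f ≤ ε →
        c / 2 ≤ ∫ x in ((n : ℝ) + τ)..((n : ℝ) + 1 + τ), (f x - σ) := by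
      intro τ hτ
      have hshift : ∀ a b : ℝ, IntervalIntegrable (fun u => f (u + τ) - σ) volume a b := by
        intro a b
        have := (hInt (a + τ) (b + τ)).comp_add_right τ
        simpa using this
      have hshIcc : IntegrableOn (fun u => f (u + τ) - σ) (Icc (n : ℝ) ((n : ℝ) + 1)) volume :=
        (intervalIntegrable_iff_integrableOn_Icc_of_le (by linarith)).1 (hshift _ _)
      set Bad : Set ℝ := {x ∈ Icc (n : ℝ) ((n : ℝ) + 1) | c / 4 ≤ |f (x + τ) - f x|} with hBad
      have hBadD : (volume Bad).toReal ≤ ε := by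
        have hbdd : BddAbove (range fun u : ℝ =>
            (volume {x ∈ Icc u (u + 1) | c / 4 ≤ |f (x + τ) - f x|}).toReal) := by
          refine ⟨1, ?_⟩
          rintro y ⟨u, rfl⟩
          have h1 : volume {x ∈ Icc u (u + 1) | c / 4 ≤ |f (x + τ) - f x|}
              ≤ volume (Icc u (u + 1)) := measure_mono (sep_subset _ _)
          calc (volume {x ∈ Icc u (u + 1) | c / 4 ≤ |f (x + τ) - f x|}).toReal
              ≤ (volume (Icc u (u + 1))).toReal :=
                ENNReal.toReal_mono (by simp [Real.volume_Icc]) h1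
            _ = 1 := by simp [Real.volume_Icc]
        have h2 : (volume {x ∈ Icc (n : ℝ) ((n : ℝ) + 1) | c / 4 ≤ |f (x + τ) - f x|}).toReal
            ≤ Dfun (c / 4) (fun t => f (t + τ)) f := by
          simpa [Dfun] using le_ciSup hbdd (n : ℝ)
        exact h2.trans hτ
      have hBadfin : volume Bad ≠ ⊤ :=
        ne_top_of_le_ne_top measure_Icc_lt_top.ne (measure_mono (sep_subset _ _))
      have hBadv : volume Bad ≤ ENNReal.ofReal ε :=
        (ENNReal.le_ofReal_iff_toReal_le hBadfin hε.le).2 hBadD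
      set B : Set ℝ := toMeasurable volume Bad ∩ Icc (n : ℝ) ((n : ℝ) + 1) with hBdef
      have hBm : MeasurableSet B := (measurableSet_toMeasurable _ _).inter measurableSet_Icc
      have hBadB : Bad ⊆ B := subset_inter (subset_toMeasurable _ _) (sep_subset _ _)
      have hBv : volume B ≤ ENNReal.ofReal ε := by
        calc volume B ≤ volume (toMeasurable volume Bad) := measure_mono inter_subset_left
          _ = volume Bad := measure_toMeasurable _
          _ ≤ ENNReal.ofReal ε := hBadv
      have hBsub : B ⊆ Icc (n : ℝ) ((n : ℝ) + 1) := inter_subset_right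
      have hB4 : ∫ x in B, (f x - σ) ≤ c / 4 := hεP B hBsub hBm hBv
      set G : Set ℝ := Icc (n : ℝ) ((n : ℝ) + 1) \ B with hGdef
      have hGm : MeasurableSet G := measurableSet_Icc.diff hBm
      have hGsub : G ⊆ Icc (n : ℝ) ((n : ℝ) + 1) := diff_subset
      have hGInt : IntegrableOn (fun u => f u - σ) G volume := hIccInt.mono_set hGsub
      have hGshInt : IntegrableOn (fun u => f (u + τ) - σ) G volume := hshIcc.mono_set hGsub
      have hBInt : IntegrableOn (fun u => f u - σ) B volume := hIccInt.mono_set hBsub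
      have hBshInt : IntegrableOn (fun u => f (u + τ) - σ) B volume := hshIcc.mono_set hBsub
      have hGpt : ∀ x ∈ G, f x - σ - c / 4 ≤ f (x + τ) - σ := by
        intro x hx
        have hxB : x ∉ B := hx.2
        have hxBad : x ∉ Bad := fun hc => hxB (hBadB hc)
        have : ¬ c / 4 ≤ |f (x + τ) - f x| := fun hc => hxBad ⟨hx.1, hc⟩
        have habs := abs_lt.1 (not_le.1 this)
        linarith [habs.1]
      have htransp : ∀ᵐ u : ℝ, σ ≤ f (u + τ) :=
        (measurePreserving_add_right volume τ).quasiMeasurePreserving.tendsto_ae.eventually hpos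
      -- split
      have esplit : ∫ x in Icc (n : ℝ) ((n : ℝ) + 1), (f (x + τ) - σ)
          = (∫ x in G, (f (x + τ) - σ)) + ∫ x in B, (f (x + τ) - σ) := by
        rw [← setIntegral_union disjoint_sdiff_left hBm hGshInt hBshInt,
          diff_union_of_subset hBsub]
      have esplit2 : ∫ x in Icc (n : ℝ) ((n : ℝ) + 1), (f x - σ)
          = (∫ x in G, (f x - σ)) + ∫ x in B, (f x - σ) := by
        rw [← setIntegral_union disjoint_sdiff_left hBm hGInt hBInt,
          diff_union_of_subset hBsub]
      have hBsh0 : 0 ≤ ∫ x in B, (f (x + τ) - σ) :=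
        setIntegral_nonneg_of_ae (htransp.mono fun x hx => sub_nonneg.2 hx)
      have hGlow : (∫ x in G, (f x - σ)) - c / 4 ≤ ∫ x in G, (f (x + τ) - σ) := by
        have h1 : ∫ x in G, (f x - σ - c / 4) ≤ ∫ x in G, (f (x + τ) - σ) :=
          setIntegral_mono_on (hGInt.sub (integrableOn_const
            (lt_of_le_of_lt (measure_mono hGsub) measure_Icc_lt_top).ne)) hGshInt hGm hGpt
        have h2 : ∫ x in G, (f x - σ - c / 4)
            = (∫ x in G, (f x - σ)) - (volume G).toReal * (c / 4) := by
          rw [integral_sub hGInt (integrableOn_const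
            (lt_of_le_of_lt (measure_mono hGsub) measure_Icc_lt_top).ne)]
          rw [setIntegral_const]
          rw [smul_eq_mul]
          rfl
        have h3 : (volume G).toReal ≤ 1 := by
          calc (volume G).toReal ≤ (volume (Icc (n : ℝ) ((n : ℝ) + 1))).toReal :=
              ENNReal.toReal_mono (by simp [Real.volume_Icc]) (measure_mono hGsub)
            _ = 1 := by simp [Real.volume_Icc]
        nlinarith [h1, h2, h3, ENNReal.toReal_nonneg (a := volume G)]
      have hGbig : c - c / 4 ≤ ∫ x in G, (f x - σ) := by
        have := esplit2
        linarith [hcIcc, hB4]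
      have e1 : (∫ x in (n : ℝ)..((n : ℝ) + 1), (f (x + τ) - σ))
          = ∫ x in ((n : ℝ) + τ)..((n : ℝ) + 1 + τ), (f x - σ) := by
        simpa using intervalIntegral.integral_comp_add_right (a := (n : ℝ))
          (b := (n : ℝ) + 1) (fun u => f u - σ) τ
      have e2 : (∫ x in (n : ℝ)..((n : ℝ) + 1), (f (x + τ) - σ))
          = ∫ x in Icc (n : ℝ) ((n : ℝ) + 1), (f (x + τ) - σ) := by
        rw [intervalIntegral.integral_of_le (by linarith), ← integral_Icc_eq_integral_Ioc]
      rw [← e1, e2, esplit]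
      linarith
    -- Step F: growth of the integral
    have hgrow : ∀ m : ℕ, ∀ t0 : ℝ, ∃ s', t0 ≤ s' ∧
        (m : ℝ) * (c / 2) ≤ ∫ x in t0..s', (f x - σ) := by
      intro m
      induction m with
      | zero => exact fun t0 => ⟨t0, le_rfl, by simp⟩
      | succ m ih =>
        intro t0
        obtain ⟨s1, hs1, hint1⟩ := ih t0
        obtain ⟨τ, hτT, hτ1, hτ2⟩ := hT (s1 - (n : ℝ))
        have h1 : s1 ≤ (n : ℝ) + τ := by linarith
        refine ⟨(n : ℝ) + 1 + τ, by linarith, ?_⟩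
        have e1 : (∫ x in t0..s1, (f x - σ)) + (∫ x in s1..((n : ℝ) + 1 + τ), (f x - σ))
            = ∫ x in t0..((n : ℝ) + 1 + τ), (f x - σ) :=
          intervalIntegral.integral_add_adjacent_intervals (hInt _ _) (hInt _ _)
        have e2 : (∫ x in s1..((n : ℝ) + τ), (f x - σ))
            + (∫ x in ((n : ℝ) + τ)..((n : ℝ) + 1 + τ), (f x - σ))
            = ∫ x in s1..((n : ℝ) + 1 + τ), (f x - σ) :=
          intervalIntegral.integral_add_adjacent_intervals (hInt _ _) (hInt _ _)
        have h2 : 0 ≤ ∫ x in s1..((n : ℝ) + τ), (f x - σ) :=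
          intervalIntegral.integral_nonneg_of_ae h1 (hpos.mono fun x hx => sub_nonneg.2 hx)
        have h3 := hkey τ hτT
        push_cast
        linarith
    -- Step G: conclude
    obtain ⟨m, hm⟩ := exists_nat_ge (2 / c)
    obtain ⟨s', hs', hint⟩ := hgrow m t
    have h1 : 1 ≤ (m : ℝ) * (c / 2) := by
      have heq : (2 / c) * (c / 2) = 1 := by field_simp
      nlinarith [mul_le_mul_of_nonneg_right hm (show (0:ℝ) ≤ c / 2 by linarith)]
    have hts : t < s' := by
      rcases lt_or_eq_of_le hs' with h | h
      · exact h
      · exfalso; rw [← h, intervalIntegral.integral_same] at hint; linarith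
    refine ⟨s', hts, ?_⟩
    have hmono : Real.exp (σ * t) * (∫ x in t..s', (f x - σ))
        ≤ ∫ x in t..s', (f x - σ) * Real.exp (σ * x) := by
      rw [← intervalIntegral.integral_const_mul]
      apply intervalIntegral.integral_mono_ae_restrict hs'
        ((hInt t s').const_mul _) (hIntExp t s')
      filter_upwards [ae_restrict_of_ae hpos, ae_restrict_mem measurableSet_Icc] with x hx hxm
      have hexp : Real.exp (σ * t) ≤ Real.exp (σ * x) :=
        Real.exp_le_exp.2 (mul_le_mul_of_nonneg_left hxm.1 hσ)
      nlinarith [sub_nonneg.2 hx, Real.exp_pos (σ * t)]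
    calc Real.exp (σ * t) = Real.exp (σ * t) * 1 := by ring
      _ ≤ Real.exp (σ * t) * (∫ x in t..s', (f x - σ)) :=
          mul_le_mul_of_nonneg_left (h1.trans hint) (Real.exp_pos _).le
      _ ≤ ∫ x in t..s', (f x - σ) * Real.exp (σ * x) := hmono
end
end

section
/- Suppose σ = 0 and f : ℝ → ℝ is locally integrable with f ≥ 0 a.e. If for some s ∈ ℝ all iterates Φⁿ(s) of the firing map of the perfect integrator model are defined and the firing rate FR(s) = lim_{n→∞} n/Φⁿ(s) exists (possibly +∞), then the mean value M{f} = lim_{T→+∞}(1/T)∫_s^T f(u) du exists and equals FR(s). -/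
open MeasureTheory Filter Set intervalIntegral

noncomputable section

theorem stmt14 (f : ℝ → ℝ) (hf : LocallyIntegrable f volume) (hpos : ∀ᵐ t, 0 ≤ f t)
    (s : ℝ) (ϕ : ℕ → ℝ) (h0 : ϕ 0 = s)
    (hiter : ∀ n, IsLeast {t' | ϕ n < t' ∧ 1 ≤ ∫ u in (ϕ n)..t', f u} (ϕ (n + 1))) :
    (∀ r : ℝ, Tendsto (fun n : ℕ => (n : ℝ) / ϕ n) atTop (nhds r) →
      Tendsto (fun T => (1 / T) * ∫ u in s..T, f u) atTop (nhds r)) ∧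
    (Tendsto (fun n : ℕ => (n : ℝ) / ϕ n) atTop atTop →
      Tendsto (fun T => (1 / T) * ∫ u in s..T, f u) atTop atTop) := by
  classical
  have hint : ∀ a b : ℝ, IntervalIntegrable f volume a b := fun a b =>
    (hf.integrableOn_isCompact isCompact_uIcc).intervalIntegrable
  set F : ℝ → ℝ := fun T => ∫ u in s..T, f u with hFdef
  have hlt : ∀ n, ϕ n < ϕ (n + 1) := fun n => (hiter n).1.1
  have hsm : StrictMono ϕ := strictMono_nat_of_lt_succ hlt
  have hnn : ∀ a b : ℝ, a ≤ b → 0 ≤ ∫ u in a..b, f u := fun a b hab =>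
    intervalIntegral.integral_nonneg_of_ae hab hpos
  have heq1 : ∀ n, (∫ u in (ϕ n)..(ϕ (n + 1)), f u) = 1 := by
    intro n
    by_contra hne
    have hgt : 1 < ∫ u in (ϕ n)..(ϕ (n + 1)), f u :=
      lt_of_le_of_ne (hiter n).1.2 (Ne.symm hne)
    have hc : ContinuousOn (fun y => ∫ u in (ϕ n)..y, f u) (Icc (ϕ n) (ϕ (n + 1))) :=
      (intervalIntegral.continuous_primitive hint (ϕ n)).continuousOn
    have h1mem : (1 : ℝ) ∈
        Ioo ((fun y => ∫ u in (ϕ n)..y, f u) (ϕ n))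
          ((fun y => ∫ u in (ϕ n)..y, f u) (ϕ (n + 1))) := by
      simp only [intervalIntegral.integral_same]
      exact ⟨one_pos, hgt⟩
    obtain ⟨y, hy, hyeq⟩ := intermediate_value_Ioo (le_of_lt (hlt n)) hc h1mem
    have hyle : ϕ (n + 1) ≤ y := (hiter n).2 ⟨hy.1, le_of_eq hyeq.symm⟩
    exact absurd hy.2 (not_lt.2 hyle)
  have hFphi : ∀ n : ℕ, F (ϕ n) = n := by
    intro n
    induction n with
    | zero => simp [hFdef, h0]
    | succ n ih =>
      have hadd := intervalIntegral.integral_add_adjacent_intervals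
        (hint s (ϕ n)) (hint (ϕ n) (ϕ (n + 1)))
      have hstep : F (ϕ (n + 1)) = F (ϕ n) + ∫ u in (ϕ n)..(ϕ (n + 1)), f u := by
        simp only [hFdef]; linarith
      rw [hstep, ih, heq1 n]
      push_cast; ring
  have hFmono : Monotone F := by
    intro a b hab
    have hadd := intervalIntegral.integral_add_adjacent_intervals (hint s a) (hint a b)
    have h2 := hnn a b hab
    simp only [hFdef] at *
    linarith
  have htop : Tendsto ϕ atTop atTop := by
    apply tendsto_atTop_atTop_of_monotone hsm.monotone
    intro L
    by_contra h
    push_neg at h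
    obtain ⟨n, hn⟩ := exists_nat_gt (F L)
    have h1 : (n : ℝ) ≤ F L := by
      rw [← hFphi n]; exact hFmono (h n).le
    linarith
  have hexist : ∀ T : ℝ, s ≤ T → ∃ n, ϕ n ≤ T ∧ T < ϕ (n + 1) := by
    intro T hT
    have hne : ∃ m, T < ϕ m := (htop.eventually_gt_atTop T).exists
    have hm : T < ϕ (Nat.find hne) := Nat.find_spec hne
    have hm0 : Nat.find hne ≠ 0 := by
      intro h
      rw [h, h0] at hm
      exact absurd hm (not_lt.2 hT)
    obtain ⟨k, hk⟩ := Nat.exists_eq_succ_of_ne_zero hm0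
    refine ⟨k, not_lt.1 (Nat.find_min hne (by omega)), ?_⟩
    rw [← Nat.succ_eq_add_one, ← hk]
    exact hm
  have hsand : ∀ n1 : ℕ, 0 < ϕ n1 → ∀ᶠ T in atTop, ∃ n, n1 ≤ n ∧
      (n : ℝ) / (ϕ (n + 1)) ≤ F T / T ∧ F T / T ≤ ((n : ℝ) + 1) / (ϕ n) := by
    intro n1 hn1
    filter_upwards [eventually_ge_atTop s, eventually_ge_atTop (ϕ n1)] with T hTs hTn1
    obtain ⟨n, hna, hnb⟩ := hexist T hTs
    have hge : n1 ≤ n := by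
      by_contra h
      push_neg at h
      have : ϕ (n + 1) ≤ ϕ n1 := hsm.monotone (by omega)
      linarith
    have hTpos : 0 < T := lt_of_lt_of_le hn1 hTn1
    have hpn : 0 < ϕ n := lt_of_lt_of_le hn1 (hsm.monotone hge)
    have hlo : (n : ℝ) ≤ F T := by rw [← hFphi n]; exact hFmono hna
    have hhi : F T ≤ (n : ℝ) + 1 := by
      have h2 := hFmono hnb.le
      rw [hFphi (n + 1)] at h2
      push_cast at h2
      linarith
    have hFnn : 0 ≤ F T := le_trans (by positivity) hlo
    exact ⟨n, hge, div_le_div₀ hFnn hlo hTpos hnb.le, div_le_div₀ (by positivity) hhi hpn hna⟩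
  have hinv : Tendsto (fun n : ℕ => (ϕ n)⁻¹) atTop (nhds 0) := htop.inv_tendsto_atTop
  have hinv' : Tendsto (fun n : ℕ => (ϕ (n + 1))⁻¹) atTop (nhds 0) :=
    hinv.comp (tendsto_add_atTop_nat 1)
  have hposev : ∀ᶠ n : ℕ in atTop, 0 < ϕ n := htop.eventually_gt_atTop 0
  have hform : (fun T : ℝ => (1 / T) * ∫ u in s..T, f u) = fun T => F T / T := by
    funext T
    rw [one_div, inv_mul_eq_div]
  rw [hform]
  constructor
  · intro r hr
    have hb : Tendsto (fun n : ℕ => ((n : ℝ) + 1) / ϕ n) atTop (nhds r) := by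
      have heqf : (fun n : ℕ => ((n : ℝ) + 1) / ϕ n)
          = fun n : ℕ => (n : ℝ) / ϕ n + (ϕ n)⁻¹ := by
        funext n
        rw [add_div, one_div]
      rw [heqf]
      simpa using hr.add hinv
    have hc : Tendsto (fun n : ℕ => (n : ℝ) / ϕ (n + 1)) atTop (nhds r) := by
      have h1 : Tendsto (fun n : ℕ => ((n : ℝ) + 1) / ϕ (n + 1)) atTop (nhds r) := by
        have h2 := hr.comp (tendsto_add_atTop_nat 1)
        refine h2.congr fun n => ?_
        simp [Function.comp]
      have heqf : (fun n : ℕ => (n : ℝ) / ϕ (n + 1))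
          = fun n : ℕ => ((n : ℝ) + 1) / ϕ (n + 1) - (ϕ (n + 1))⁻¹ := by
        funext n
        rcases eq_or_ne (ϕ (n + 1)) 0 with h | h
        · simp [h]
        · field_simp
          ring
      rw [heqf]
      simpa using h1.sub hinv'
    rw [Metric.tendsto_atTop] at hb hc
    refine Metric.tendsto_nhds.2 fun ε hε => ?_
    obtain ⟨n2, hn2⟩ := hb ε hε
    obtain ⟨n3, hn3⟩ := hc ε hε
    obtain ⟨n4, hn4⟩ := hposev.exists_forall_of_atTop
    set n1 := max n4 (max n2 n3) with hn1def
    filter_upwards [hsand n1 (hn4 n1 (le_max_left _ _))] with T hT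
    obtain ⟨n, hge, hL, hU⟩ := hT
    have hbn := hn2 n (le_trans (le_trans (le_max_left _ _) (le_max_right n4 _)) hge)
    have hcn := hn3 n (le_trans (le_trans (le_max_right _ _) (le_max_right n4 _)) hge)
    rw [Real.dist_eq, abs_lt] at hbn hcn ⊢
    constructor <;> linarith
  · intro hr
    have hc : Tendsto (fun n : ℕ => (n : ℝ) / ϕ (n + 1)) atTop atTop := by
      have h1 : Tendsto (fun n : ℕ => ((n : ℝ) + 1) / ϕ (n + 1)) atTop atTop := by
        have h2 := hr.comp (tendsto_add_atTop_nat 1)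
        refine h2.congr fun n => ?_
        simp [Function.comp]
      have heqf : (fun n : ℕ => (n : ℝ) / ϕ (n + 1))
          = fun n : ℕ => ((n : ℝ) + 1) / ϕ (n + 1) + (-(ϕ (n + 1))⁻¹) := by
        funext n
        field_simp
        ring
      rw [heqf]
      exact h1.atTop_add (by simpa using hinv'.neg)
    rw [tendsto_atTop] at hc ⊢
    intro M
    obtain ⟨n3, hn3⟩ := (hc M).exists_forall_of_atTop
    obtain ⟨n4, hn4⟩ := hposev.exists_forall_of_atTop
    set n1 := max n4 n3 with hn1def
    filter_upwards [hsand n1 (hn4 n1 (le_max_left _ _))] with T hT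
    obtain ⟨n, hge, hL, _⟩ := hT
    exact le_trans (hn3 n (le_trans (le_max_right _ _) hge)) hL
end
end

section
/- Let σ ≥ 0 and f : ℝ → ℝ locally integrable with f(t) − σ ≥ 0 a.e. If the firing rate FR(t) = lim_{n→∞} n/Φⁿ(t) of the LIF model exists for some t ∈ ℝ, then it exists for every s ∈ ℝ and FR(s) = FR(t). -/
open MeasureTheory Filter Set intervalIntegral

noncomputable section

private lemma aux_ratio (a b : ℝ) :
    Tendsto (fun n : ℕ => ((n : ℝ) + a) / ((n : ℝ) + b)) atTop (nhds 1) := by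
  have h1 : Tendsto (fun n : ℕ => (n : ℝ) + b) atTop atTop :=
    tendsto_atTop_add_const_right _ b tendsto_natCast_atTop_atTop
  have h2 : Tendsto (fun n : ℕ => (a - b) / ((n : ℝ) + b)) atTop (nhds 0) :=
    Tendsto.div_atTop tendsto_const_nhds h1
  have h3 := h2.const_add 1
  rw [add_zero] at h3
  refine h3.congr' ?_
  filter_upwards [h1.eventually_gt_atTop 0] with n hn
  have hne : (n : ℝ) + b ≠ 0 := ne_of_gt hn
  field_simp
  ring

private lemma sq_nhds (x y : ℕ → ℝ) (hx : Tendsto x atTop atTop) (hy : Tendsto y atTop atTop)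
    (k m : ℕ) (hk : ∀ n, x n ≤ y (n + k)) (hm : ∀ n, y n ≤ x (n + m)) (r : ℝ)
    (h : Tendsto (fun n : ℕ => (n : ℝ) / x n) atTop (nhds r)) :
    Tendsto (fun n : ℕ => (n : ℝ) / y n) atTop (nhds r) := by
  have hxpos : ∀ᶠ n : ℕ in atTop, 0 < x (n + m) :=
    (hx.comp (tendsto_add_atTop_nat m)).eventually_gt_atTop 0
  have hypos : ∀ᶠ n : ℕ in atTop, 0 < y n := hy.eventually_gt_atTop 0
  have hxk : ∀ᶠ n : ℕ in atTop, 0 < x (n - k) :=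
    (hx.comp (tendsto_sub_atTop_nat k)).eventually_gt_atTop 0
  have hL : Tendsto (fun n : ℕ => (n : ℝ) / x (n + m)) atTop (nhds r) := by
    have hA : Tendsto (fun n : ℕ => ((n + m : ℕ) : ℝ) / x (n + m)) atTop (nhds r) :=
      h.comp (tendsto_add_atTop_nat m)
    have hAB := hA.mul (aux_ratio 0 m)
    rw [mul_one] at hAB
    refine hAB.congr' ?_
    filter_upwards [hxpos, eventually_gt_atTop 0] with n hxn hn
    have h1 : (n : ℝ) + (m : ℝ) ≠ 0 := by positivity
    have h2 : x (n + m) ≠ 0 := ne_of_gt hxn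
    push_cast
    field_simp
    ring
  have hU : Tendsto (fun n : ℕ => (n : ℝ) / x (n - k)) atTop (nhds r) := by
    have hA : Tendsto (fun n : ℕ => ((n - k : ℕ) : ℝ) / x (n - k)) atTop (nhds r) :=
      h.comp (tendsto_sub_atTop_nat k)
    have hAB := hA.mul (aux_ratio 0 (-(k : ℝ)))
    rw [mul_one] at hAB
    refine hAB.congr' ?_
    filter_upwards [hxk, eventually_gt_atTop k] with n hxn hn
    have hcast : ((n - k : ℕ) : ℝ) = (n : ℝ) - k := by
      rw [Nat.cast_sub hn.le]
    have hklt : (k : ℝ) < (n : ℝ) := by exact_mod_cast hn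
    have h1 : (n : ℝ) + -(k : ℝ) ≠ 0 := by intro hc; linarith
    have h2 : x (n - k) ≠ 0 := ne_of_gt hxn
    simp only [hcast, add_zero]
    field_simp
    ring
  refine tendsto_of_tendsto_of_tendsto_of_le_of_le' hL hU ?_ ?_
  · filter_upwards [hxpos, hypos] with n h1 h2
    exact div_le_div_of_nonneg_left (Nat.cast_nonneg n) h2 (hm n)
  · filter_upwards [hxk, hypos, eventually_ge_atTop k] with n h1 h2 h3
    have hle : x (n - k) ≤ y n := by
      have := hk (n - k)
      rwa [Nat.sub_add_cancel h3] at this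
    exact div_le_div_of_nonneg_left (Nat.cast_nonneg n) h1 hle

private lemma sq_top (x y : ℕ → ℝ) (hx : Tendsto x atTop atTop) (hy : Tendsto y atTop atTop)
    (m : ℕ) (hm : ∀ n, y n ≤ x (n + m))
    (h : Tendsto (fun n : ℕ => (n : ℝ) / x n) atTop atTop) :
    Tendsto (fun n : ℕ => (n : ℝ) / y n) atTop atTop := by
  have hxpos : ∀ᶠ n : ℕ in atTop, 0 < x (n + m) :=
    (hx.comp (tendsto_add_atTop_nat m)).eventually_gt_atTop 0
  have hypos : ∀ᶠ n : ℕ in atTop, 0 < y n := hy.eventually_gt_atTop 0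
  have hL : Tendsto (fun n : ℕ => (n : ℝ) / x (n + m)) atTop atTop := by
    have hA : Tendsto (fun n : ℕ => ((n + m : ℕ) : ℝ) / x (n + m)) atTop atTop :=
      h.comp (tendsto_add_atTop_nat m)
    have hB : Tendsto (fun n : ℕ => -((m : ℝ) / x (n + m))) atTop (nhds 0) := by
      have := Tendsto.div_atTop (tendsto_const_nhds (x := (m : ℝ)))
        (hx.comp (tendsto_add_atTop_nat m))
      simpa using this.neg
    have := hA.atTop_add hB
    refine this.congr ?_
    intro n
    push_cast
    rw [← sub_eq_add_neg, ← sub_div, add_sub_cancel_right]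
  refine tendsto_atTop_mono' _ ?_ hL
  filter_upwards [hxpos, hypos] with n h1 h2
  exact div_le_div_of_nonneg_left (Nat.cast_nonneg n) h2 (hm n)

theorem stmt15 (σ : ℝ) (hσ : 0 ≤ σ) (f : ℝ → ℝ) (hf : LocallyIntegrable f volume)
    (hpos : ∀ᵐ t, σ ≤ f t) (Φ : ℝ → ℝ) (hΦ : ∀ t, FiringEq σ f t (Φ t)) (t : ℝ) :
    (∀ r : ℝ, Tendsto (fun n : ℕ => (n : ℝ) / Φ^[n] t) atTop (nhds r) →
      ∀ s : ℝ, Tendsto (fun n : ℕ => (n : ℝ) / Φ^[n] s) atTop (nhds r)) ∧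
    (Tendsto (fun n : ℕ => (n : ℝ) / Φ^[n] t) atTop atTop →
      ∀ s : ℝ, Tendsto (fun n : ℕ => (n : ℝ) / Φ^[n] s) atTop atTop) := by
  set g : ℝ → ℝ := fun u => (f u - σ) * Real.exp (σ * u) with hgdef
  have hfσ : LocallyIntegrable (fun u => f u - σ) volume := hf.sub (locallyIntegrable_const σ)
  have hgint : ∀ a b : ℝ, IntervalIntegrable g volume a b := by
    intro a b
    exact (((hfσ.integrableOn_isCompact isCompact_uIcc).mul_continuousOn
      ((Real.continuous_exp.comp (continuous_const.mul continuous_id)).continuousOn)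
      isCompact_uIcc)).intervalIntegrable
  have hg0 : ∀ᵐ u, 0 ≤ g u := hpos.mono fun u hu =>
    mul_nonneg (sub_nonneg.2 hu) (Real.exp_pos _).le
  have hInt0 : ∀ a b : ℝ, a ≤ b → 0 ≤ ∫ u in a..b, g u := fun a b hab =>
    intervalIntegral.integral_nonneg_of_ae hab hg0
  have hΦgt : ∀ x, x < Φ x := fun x => (hΦ x).1.1
  have hΦeq : ∀ x, Real.exp (σ * x) = ∫ u in x..(Φ x), g u := fun x => (hΦ x).1.2
  have hΦmono : Monotone Φ := by
    intro a b hab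
    have hFc : Continuous (fun z => ∫ u in a..z, g u) :=
      intervalIntegral.continuous_primitive hgint a
    have h1 : a < Φ b := lt_of_le_of_lt hab (hΦgt b)
    have h2 : Real.exp (σ * a) ≤ ∫ u in a..(Φ b), g u := by
      have hadd : (∫ u in a..b, g u) + ∫ u in b..(Φ b), g u = ∫ u in a..(Φ b), g u :=
        integral_add_adjacent_intervals (hgint a b) (hgint b (Φ b))
      have h3 : 0 ≤ ∫ u in a..b, g u := hInt0 a b hab
      have h4 : Real.exp (σ * a) ≤ Real.exp (σ * b) :=
        Real.exp_le_exp.2 (mul_le_mul_of_nonneg_left hab hσ)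
      have h5 := hΦeq b
      linarith
    have hFa : (∫ u in a..a, g u) = 0 := intervalIntegral.integral_same
    have hmem : Real.exp (σ * a) ∈ Set.Icc (∫ u in a..a, g u) (∫ u in a..(Φ b), g u) :=
      ⟨by rw [hFa]; exact (Real.exp_pos _).le, h2⟩
    obtain ⟨c, hc, hFc'⟩ := intermediate_value_Icc h1.le hFc.continuousOn hmem
    have hca : a < c := by
      rcases eq_or_lt_of_le hc.1 with hh | hh
      · exact absurd (hFc'.symm.trans (hh ▸ hFa)) (ne_of_gt (Real.exp_pos _))
      · exact hh
    exact ((hΦ a).2 ⟨hca, hFc'.symm⟩).trans hc.2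
  have hiter : ∀ s, Tendsto (fun n : ℕ => Φ^[n] s) atTop atTop := by
    intro s
    set x : ℕ → ℝ := fun n => Φ^[n] s with hxdef
    have hxmono : Monotone x :=
      monotone_nat_of_le_succ fun n => by
        rw [hxdef]; simp only []
        rw [Function.iterate_succ_apply']
        exact (hΦgt _).le
    rcases tendsto_of_monotone hxmono with hh | ⟨L, hL⟩
    · exact hh
    exfalso
    have hFc : Continuous (fun z => ∫ u in s..z, g u) :=
      intervalIntegral.continuous_primitive hgint s
    have hFx : Tendsto (fun n => ∫ u in s..(x n), g u) atTop (nhds (∫ u in s..L, g u)) :=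
      ((hFc.tendsto L).comp hL)
    have hFx1 : Tendsto (fun n => ∫ u in s..(x (n + 1)), g u) atTop (nhds (∫ u in s..L, g u)) :=
      hFx.comp (tendsto_add_atTop_nat 1)
    have hdiff : Tendsto (fun n => (∫ u in s..(x (n + 1)), g u) - ∫ u in s..(x n), g u)
        atTop (nhds 0) := by
      have := hFx1.sub hFx; simpa using this
    have heq : ∀ n, (∫ u in s..(x (n + 1)), g u) - (∫ u in s..(x n), g u)
        = Real.exp (σ * x n) := by
      intro n
      have hstep : x (n + 1) = Φ (x n) := Function.iterate_succ_apply' Φ n s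
      have hadd : (∫ u in s..(x n), g u) + ∫ u in (x n)..(x (n + 1)), g u
          = ∫ u in s..(x (n + 1)), g u :=
        integral_add_adjacent_intervals (hgint s (x n)) (hgint (x n) (x (n + 1)))
      have h5 : Real.exp (σ * x n) = ∫ u in (x n)..(x (n + 1)), g u := by
        rw [hstep]; exact hΦeq (x n)
      linarith
    have hexp : Tendsto (fun n => Real.exp (σ * x n)) atTop (nhds 0) := by
      refine hdiff.congr fun n => heq n
    have hexp' : Tendsto (fun n => Real.exp (σ * x n)) atTop (nhds (Real.exp (σ * L))) :=
      (Real.continuous_exp.tendsto _).comp ((continuous_const.mul continuous_id).tendsto L |>.comp hL)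
    have := tendsto_nhds_unique hexp hexp'
    exact absurd this.symm (ne_of_gt (Real.exp_pos _))
  constructor
  · intro r h s
    obtain ⟨k, hk⟩ := ((hiter s).eventually_ge_atTop t).exists
    obtain ⟨m, hm⟩ := ((hiter t).eventually_ge_atTop s).exists
    refine sq_nhds _ _ (hiter t) (hiter s) k m ?_ ?_ r h
    · intro n
      rw [Function.iterate_add_apply]
      exact (hΦmono.iterate n) hk
    · intro n
      rw [Function.iterate_add_apply]
      exact (hΦmono.iterate n) hm
  · intro h s
    obtain ⟨m, hm⟩ := ((hiter t).eventually_ge_atTop s).exists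
    refine sq_top _ _ (hiter t) (hiter s) m ?_ h
    intro n
    rw [Function.iterate_add_apply]
    exact (hΦmono.iterate n) hm
end
end
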